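/- arXiv:1806.11370 — 3 statements merged into one kernel-verified Lean document; each statement's English description precedes it below -/
import Mathlib

section
/- Let (Ω, 𝓖, μ) be a probability space with a filtration (𝓕_t)_{t≥1}, and let (A_t)_{t≥1} be a sequence of {0,1}-valued random variables such that A_t is 𝓕_t-measurable for every t. For t ≥ 1 let p̂_{0,t} = (1/t)·#{s ≤ t : A_s = 0} be the proportion of the first t assignments equal to 0, let π_t be (a version of) the conditional probability P(A_{t+1} = 0 | 𝓕_t), and set F_t = π_t − p̂_{0,t}. Fix ρ_0 ∈ [0,1]. Suppose that on a set of probability 1 the following holds: for every ε > 0 there exist a (random) time T and a number c > 0 such that for all t > T, F_t < −c whenever p̂_{0,t} > ρ_0 + ε, and F_t > c whenever p̂_{0,t} < ρ_0 − ε. Then p̂_{0,t} → ρ_0 almost surely as t → ∞. -/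
open MeasureTheory Filter

open Finset
lemma detUpper (x F η : ℕ → ℝ) (ρ₀ B : ℝ)
    (hlb : ∀ t, 1 ≤ t → B ≤ x t)
    (hrec : ∀ t, 1 ≤ t → x (t+1) = x t + (F t + η t)/(t+1))
    (hstep : ∀ t, 1 ≤ t → |F t + η t| ≤ 1)
    (hS : ∃ L, Tendsto (fun n => ∑ s ∈ Finset.Icc 1 n, η s/(s+1)) atTop (nhds L))
    (hdrift : ∀ ε, 0 < ε → ∃ T c, 0 < c ∧ ∀ t, T < t → x t > ρ₀ + ε → F t < -c) :
    ∀ ε, 0 < ε → ∃ N, ∀ t ≥ N, x t < ρ₀ + ε := by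
  intro ε hε
  obtain ⟨T, c, hc, hdr⟩ := hdrift (ε/4) (by positivity)
  obtain ⟨L, hL⟩ := hS
  have hS' : Tendsto (fun n => ∑ s ∈ Finset.Ico 1 n, η s/((s:ℝ)+1)) atTop (nhds L) := by
    rw [← tendsto_add_atTop_iff_nat 1]
    have heq : (fun n => ∑ s ∈ Finset.Ico 1 (n+1), η s/((s:ℝ)+1))
        = fun n => ∑ s ∈ Finset.Icc 1 n, η s/((s:ℝ)+1) := by
      funext n; rw [Finset.Ico_add_one_right_eq_Icc]
    rw [heq]; exact hL
  set εc := min c ε with hεcdef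
  have hεc : 0 < εc := lt_min hc hε
  obtain ⟨N₀, hN₀⟩ := (Metric.tendsto_atTop.1 hS') (εc/16) (by positivity)
  have hnoise : ∀ m n, N₀ ≤ m → N₀ ≤ n →
      |(∑ s ∈ Finset.Ico 1 m, η s/((s:ℝ)+1)) - ∑ s ∈ Finset.Ico 1 n, η s/((s:ℝ)+1)| ≤ εc/8 := by
    intro m n hm hn
    have h1 := hN₀ m hm; have h2 := hN₀ n hn
    rw [Real.dist_eq] at h1 h2
    have h3 := abs_sub_le (∑ s ∈ Finset.Ico 1 m, η s/((s:ℝ)+1)) L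
      (∑ s ∈ Finset.Ico 1 n, η s/((s:ℝ)+1))
    rw [abs_sub_comm L] at h3
    linarith
  obtain ⟨N₁, hN₁⟩ := exists_nat_ge (4/ε)
  have hsmall : ∀ t : ℕ, N₁ ≤ t → 1/((t:ℝ)+1) ≤ ε/4 := by
    intro t ht
    have h4 : (0:ℝ) < 4/ε := by positivity
    have h5 : (4/ε : ℝ) ≤ (t:ℝ)+1 := by
      calc (4/ε : ℝ) ≤ N₁ := hN₁
        _ ≤ (t:ℝ) := by exact_mod_cast ht
        _ ≤ (t:ℝ)+1 := by linarith
    calc 1/((t:ℝ)+1) ≤ 1/(4/ε) := one_div_le_one_div_of_le h4 h5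
      _ = ε/4 := one_div_div 4 ε
  set T' := max (max T N₀) (max N₁ 1) with hT'def
  have hT'T : T ≤ T' := le_trans (le_max_left _ _) (le_max_left _ _)
  have hT'N₀ : N₀ ≤ T' := le_trans (le_max_right _ _) (le_max_left _ _)
  have hT'N₁ : N₁ ≤ T' := le_trans (le_max_left _ _) (le_max_right _ _)
  have hT'1 : 1 ≤ T' := le_trans (le_max_right _ _) (le_max_right _ _)
  -- telescoping
  have htel : ∀ r u, 1 ≤ r → r ≤ u →
      x u = x r + (∑ s ∈ Finset.Ico r u, F s/((s:ℝ)+1))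
        + ((∑ s ∈ Finset.Ico 1 u, η s/((s:ℝ)+1)) - ∑ s ∈ Finset.Ico 1 r, η s/((s:ℝ)+1)) := by
    intro r u hr hru
    have htel0 : x u = x r + ∑ s ∈ Finset.Ico r u, (F s + η s)/((s:ℝ)+1) := by
      induction u, hru using Nat.le_induction with
      | base => simp
      | succ u hu ih =>
        have hu1 : 1 ≤ u := le_trans hr hu
        rw [hrec u hu1, ih, Finset.sum_Ico_succ_top hu]
        ring
    have hsplit : ∑ s ∈ Finset.Ico r u, (F s + η s)/((s:ℝ)+1)
        = (∑ s ∈ Finset.Ico r u, F s/((s:ℝ)+1)) + ∑ s ∈ Finset.Ico r u, η s/((s:ℝ)+1) := by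
      rw [← Finset.sum_add_distrib]
      exact Finset.sum_congr rfl fun s _ => by ring
    have hcons := Finset.sum_Ico_consecutive (fun s : ℕ => η s/((s:ℝ)+1)) hr hru
    rw [htel0, hsplit]
    linarith
  -- Claim A
  have hA : ∃ t₀, T' < t₀ ∧ x t₀ ≤ ρ₀ + ε/4 := by
    by_contra h
    push_neg at h
    have hdiv : Tendsto (fun u => ∑ s ∈ Finset.Ico (T'+1) u, 1/((s:ℝ)+1)) atTop atTop := by
      have h0 : Tendsto (fun u => ∑ s ∈ Finset.range u, 1/((s:ℝ)+1)) atTop atTop :=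
        Real.tendsto_sum_range_one_div_nat_succ_atTop
      have heq : ∀ᶠ u in atTop, (∑ s ∈ Finset.range u, 1/((s:ℝ)+1))
            - (∑ s ∈ Finset.range (T'+1), 1/((s:ℝ)+1))
          = ∑ s ∈ Finset.Ico (T'+1) u, 1/((s:ℝ)+1) := by
        filter_upwards [eventually_ge_atTop (T'+1)] with u hu
        rw [Finset.range_eq_Ico,
          ← Finset.sum_Ico_consecutive _ (Nat.zero_le (T'+1)) hu]
        rw [← Finset.range_eq_Ico]
        ring
      have h1 : Tendsto (fun u => (∑ s ∈ Finset.range u, 1/((s:ℝ)+1))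
          - (∑ s ∈ Finset.range (T'+1), 1/((s:ℝ)+1))) atTop atTop := by
        simpa [sub_eq_add_neg] using tendsto_atTop_add_const_right atTop
          (-(∑ s ∈ Finset.range (T'+1), 1/((s:ℝ)+1))) h0
      exact h1.congr' heq
    have hub : ∀ u, T'+1 ≤ u →
        c * ∑ s ∈ Finset.Ico (T'+1) u, 1/((s:ℝ)+1) ≤ x (T'+1) - B + εc/8 := by
      intro u hu
      have htel' := htel (T'+1) u (by omega) hu
      have hFs : ∑ s ∈ Finset.Ico (T'+1) u, F s/((s:ℝ)+1)
          ≤ ∑ s ∈ Finset.Ico (T'+1) u, (-c) * (1/((s:ℝ)+1)) := by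
        apply Finset.sum_le_sum
        intro s hs
        obtain ⟨hs1, hs2⟩ := Finset.mem_Ico.1 hs
        have hxs : ρ₀ + ε/4 < x s := h s (by omega)
        have hFlt : F s < -c := hdr s (by omega) hxs
        rw [div_eq_mul_one_div]
        exact mul_le_mul_of_nonneg_right hFlt.le (by positivity)
      have hsum : ∑ s ∈ Finset.Ico (T'+1) u, (-c) * (1/((s:ℝ)+1))
          = -(c * ∑ s ∈ Finset.Ico (T'+1) u, 1/((s:ℝ)+1)) := by
        rw [← Finset.mul_sum]; ring
      have hSb := hnoise u (T'+1) (by omega) (by omega)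
      have hBu : B ≤ x u := hlb u (by omega)
      have := abs_le.1 hSb
      rw [hsum] at hFs
      linarith
    obtain ⟨u, h1, h2⟩ := (((hdiv.const_mul_atTop hc).eventually_gt_atTop
      (x (T'+1) - B + εc/8)).and (eventually_ge_atTop (T'+1))).exists
    exact absurd (hub u h2) (not_le.2 h1)
  -- Claim B
  obtain ⟨t₀, ht₀T, ht₀x⟩ := hA
  refine ⟨t₀, fun u hu => ?_⟩
  by_contra hxu
  push_neg at hxu
  have ht₀u : t₀ < u := by
    rcases lt_or_eq_of_le hu with h | h
    · exact h
    · exfalso; rw [← h] at hxu; linarith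
  have hne : ((Finset.Ico t₀ u).filter (fun r => x r ≤ ρ₀ + ε/4)).Nonempty :=
    ⟨t₀, Finset.mem_filter.2 ⟨Finset.mem_Ico.2 ⟨le_refl _, ht₀u⟩, ht₀x⟩⟩
  set r := ((Finset.Ico t₀ u).filter (fun r => x r ≤ ρ₀ + ε/4)).max' hne with hrdef
  have hr := Finset.mem_filter.1 (Finset.max'_mem _ hne)
  obtain ⟨hrIco, hrx⟩ := hr
  obtain ⟨hrt₀, hru⟩ := Finset.mem_Ico.1 hrIco
  have hrmax : ∀ s, r < s → s < u → ρ₀ + ε/4 < x s := by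
    intro s hrs hsu
    by_contra hxs
    push_neg at hxs
    have hsmem : s ∈ (Finset.Ico t₀ u).filter (fun r => x r ≤ ρ₀ + ε/4) :=
      Finset.mem_filter.2 ⟨Finset.mem_Ico.2 ⟨by omega, hsu⟩, hxs⟩
    exact absurd (Finset.le_max' _ s hsmem) (not_le.2 hrs)
  have hrT' : T' < r := lt_of_lt_of_le ht₀T hrt₀
  have hr1 : 1 ≤ r := by omega
  have hx_r1 : x (r+1) ≤ ρ₀ + ε/2 := by
    rw [hrec r hr1]
    have h1 := hstep r hr1
    have h2 : 1/((r:ℝ)+1) ≤ ε/4 := hsmall r (by omega)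
    have hpos : (0:ℝ) < (r:ℝ)+1 := by positivity
    have h3 : (F r + η r)/((r:ℝ)+1) ≤ 1/((r:ℝ)+1) := by
      gcongr
      exact (abs_le.1 h1).2
    linarith
  have hur1 : r+1 ≤ u := by omega
  have htel' := htel (r+1) u (by omega) hur1
  have hFsum : ∑ s ∈ Finset.Ico (r+1) u, F s/((s:ℝ)+1) ≤ 0 := by
    apply Finset.sum_nonpos
    intro s hs
    obtain ⟨hs1, hs2⟩ := Finset.mem_Ico.1 hs
    have hxs := hrmax s (by omega) hs2
    have hFlt : F s < -c := hdr s (by omega) hxs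
    have hneg : F s ≤ 0 := by linarith
    exact div_nonpos_iff.2 (Or.inr ⟨hneg, by positivity⟩)
  have hSb := hnoise u (r+1) (by omega) (by omega)
  have hεc8 : εc ≤ ε := min_le_right c ε
  have := abs_le.1 hSb
  push_cast at htel' hx_r1
  linarith

lemma sumInvSq (n : ℕ) : ∑ s ∈ Finset.range n, (1/((s:ℝ)+1))^2 ≤ 2 := by
  have key : ∀ n : ℕ, 1 ≤ n → ∑ s ∈ Finset.range n, (1/((s:ℝ)+1))^2 ≤ 2 - 1/(n:ℝ) := by
    intro n hn
    induction n, hn using Nat.le_induction with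
    | base => norm_num
    | succ n hn ih =>
      rw [Finset.sum_range_succ]
      push_cast
      have h1 : (1:ℝ) ≤ (n:ℝ) := by exact_mod_cast hn
      have h2 : (0:ℝ) < (n:ℝ) := by linarith
      have h3 : (0:ℝ) < (n:ℝ)+1 := by linarith
      have e1 : 1/(n:ℝ) - 1/((n:ℝ)+1) = 1/((n:ℝ)*((n:ℝ)+1)) := by
        field_simp
        ring
      have e2 : (1/((n:ℝ)+1))^2 ≤ 1/((n:ℝ)*((n:ℝ)+1)) := by
        rw [div_pow, one_pow]
        apply one_div_le_one_div_of_le (by positivity) (by nlinarith)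
      linarith
  rcases Nat.eq_zero_or_pos n with h | h
  · simp [h]
  · have := key n h
    have h2 : (0:ℝ) < (n:ℝ) := by exact_mod_cast h
    have : 0 < 1/(n:ℝ) := by positivity
    linarith [key n h]

lemma noise_conv {Ω : Type*} {𝓖 : MeasurableSpace Ω} {μ : Measure Ω} [IsProbabilityMeasure μ]
    (𝓕 : Filtration ℕ 𝓖) (ξ : ℕ → Ω → ℝ)
    (hmeas : ∀ t, Measurable[𝓕 (t+1)] (ξ t))
    (hbdd : ∀ t ω, |ξ t ω| ≤ 1) :
    ∀ᵐ ω ∂μ, ∃ L : ℝ, Tendsto (fun n => ∑ s ∈ Finset.range n,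
      (if s = 0 then (0:ℝ) else (((s:ℝ)+1)⁻¹ * (ξ s ω - (μ[ξ s | 𝓕 s]) ω)))) atTop (nhds L) := by
  classical
  set cond : ℕ → Ω → ℝ := fun t => μ[ξ t | 𝓕 t] with hconddef
  set gg : ℕ → Ω → ℝ := fun s => if s = 0 then 0 else (((s:ℝ)+1)⁻¹) • (ξ s - cond s) with hggdef
  set M : ℕ → Ω → ℝ := fun n => ∑ s ∈ Finset.range n, gg s with hMdef
  have hξ_int : ∀ t, Integrable (ξ t) μ := fun t =>
    ⟨((hmeas t).mono (𝓕.le _) le_rfl).aestronglyMeasurable,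
      HasFiniteIntegral.of_bounded (C := 1) (ae_of_all _ fun ω => by
        simpa [Real.norm_eq_abs] using hbdd t ω)⟩
  have hcond_sm : ∀ t, StronglyMeasurable[𝓕 t] (cond t) := fun t => stronglyMeasurable_condExp
  have hcond_int : ∀ t, Integrable (cond t) μ := fun t => integrable_condExp
  have hcond_bdd : ∀ t, ∀ᵐ ω ∂μ, |cond t ω| ≤ 1 := fun t =>
    ae_bdd_condExp_of_ae_bdd (R := 1) (ae_of_all _ fun ω => by simpa using hbdd t ω)
  have gg_sm : ∀ s, StronglyMeasurable[𝓕 (s+1)] (gg s) := by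
    intro s
    rw [hggdef]
    by_cases hs : s = 0
    · simp only [hs, if_pos rfl]
      exact stronglyMeasurable_const
    · simp only [if_neg hs]
      exact (((hmeas s).stronglyMeasurable.sub
        ((hcond_sm s).mono (𝓕.mono (Nat.le_succ s)))).const_smul _)
  have gg_int : ∀ s, Integrable (gg s) μ := by
    intro s
    rw [hggdef]
    by_cases hs : s = 0
    · simp only [hs, if_pos rfl]; exact integrable_zero _ _ _
    · simp only [if_neg hs]
      exact ((hξ_int s).sub (hcond_int s)).smul _
  have gg_bdd : ∀ᵐ ω ∂μ, ∀ s, |gg s ω| ≤ 2/((s:ℝ)+1) := by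
    rw [ae_all_iff]
    intro s
    filter_upwards [hcond_bdd s] with ω hω
    rw [hggdef]
    by_cases hs : s = 0
    · simp only [hs, if_pos rfl]; norm_num
    · simp only [if_neg hs, Pi.smul_apply, Pi.sub_apply, smul_eq_mul, abs_mul]
      have h1 : (0:ℝ) < (s:ℝ)+1 := by positivity
      have h2 : |ξ s ω - cond s ω| ≤ 2 := by
        have ha := abs_le.1 (hbdd s ω)
        have hb := abs_le.1 hω
        rw [abs_le]
        constructor <;> linarith
      rw [abs_inv, abs_of_pos h1, div_eq_inv_mul]
      exact mul_le_mul_of_nonneg_left h2 (by positivity)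
  have hM_sm : ∀ n, StronglyMeasurable[𝓕 n] (M n) := by
    intro n
    have hmeasM : Measurable[𝓕 n] fun ω => ∑ s ∈ Finset.range n, gg s ω :=
      Finset.measurable_sum _ fun s hs =>
        ((gg_sm s).measurable.mono (𝓕.mono (Finset.mem_range.1 hs)) le_rfl)
    have heq : M n = fun ω => ∑ s ∈ Finset.range n, gg s ω := by
      funext ω; rw [hMdef]; simp [Finset.sum_apply]
    rw [heq]; exact hmeasM.stronglyMeasurable
  have hM_int : ∀ n, Integrable (M n) μ := fun n =>
    integrable_finset_sum' _ fun s _ => gg_int s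
  have hMsucc : ∀ n, M (n+1) = M n + gg n := by
    intro n; rw [hMdef]; exact Finset.sum_range_succ gg n
  have hcz : ∀ n, μ[gg n | 𝓕 n] =ᵐ[μ] 0 := by
    intro n
    by_cases h0 : n = 0
    · subst h0
      have hz : gg 0 = (0 : Ω → ℝ) := by rw [hggdef]; simp
      rw [hz, condExp_zero]
    · have hg : gg n = (((n:ℝ)+1)⁻¹) • (ξ n - cond n) := by rw [hggdef]; simp [h0]
      rw [hg]
      refine (condExp_smul _ _ _).trans ?_
      have h1 : μ[ξ n - cond n|𝓕 n] =ᵐ[μ] μ[ξ n|𝓕 n] - μ[cond n|𝓕 n] :=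
        condExp_sub (hξ_int n) (hcond_int n) _
      have h2 : μ[cond n|𝓕 n] = cond n :=
        condExp_of_stronglyMeasurable (𝓕.le n) (hcond_sm n) (hcond_int n)
      filter_upwards [h1] with ω hω
      have h3 : cond n = μ[ξ n|𝓕 n] := by rw [hconddef]
      simp only [Pi.smul_apply, Pi.zero_apply, smul_eq_mul, hω, Pi.sub_apply, h2]
      rw [h3]
      ring
  have hadp : StronglyAdapted 𝓕 M := fun n => hM_sm n
  have hmart : Martingale M 𝓕 μ := by
    apply martingale_nat hadp hM_int
    intro n
    have h1 : μ[M (n+1)|𝓕 n] =ᵐ[μ] μ[M n|𝓕 n] + μ[gg n|𝓕 n] := by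
      rw [hMsucc n]; exact condExp_add (hM_int n) (gg_int n) _
    have h2 : μ[M n|𝓕 n] = M n :=
      condExp_of_stronglyMeasurable (𝓕.le n) (hM_sm n) (hM_int n)
    refine EventuallyEq.symm (h1.trans ?_)
    filter_upwards [hcz n] with ω hω
    simp [h2, hω]
  have int_of_bdd : ∀ (f : Ω → ℝ) (C : ℝ), AEStronglyMeasurable f μ →
      (∀ᵐ ω ∂μ, |f ω| ≤ C) → Integrable f μ := fun f C hm hb =>
    ⟨hm, HasFiniteIntegral.of_bounded (C := C) (by
      filter_upwards [hb] with ω h; simpa [Real.norm_eq_abs] using h)⟩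
  set Cb : ℕ → ℝ := fun n => ∑ s ∈ Finset.range n, 2/((s:ℝ)+1) with hCbdef
  have hCb0 : ∀ n, 0 ≤ Cb n := fun n => Finset.sum_nonneg fun s _ => by positivity
  have hMb : ∀ᵐ ω ∂μ, ∀ n, |M n ω| ≤ Cb n := by
    filter_upwards [gg_bdd] with ω hω
    intro n
    calc |M n ω| = |∑ s ∈ Finset.range n, gg s ω| := by rw [hMdef]; simp [Finset.sum_apply]
      _ ≤ ∑ s ∈ Finset.range n, |gg s ω| := Finset.abs_sum_le_sum_abs _ _
      _ ≤ ∑ s ∈ Finset.range n, 2/((s:ℝ)+1) := Finset.sum_le_sum fun s _ => hω s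
  have aesm_M : ∀ n, AEStronglyMeasurable (M n) μ := fun n =>
    ((hM_sm n).mono (𝓕.le n)).aestronglyMeasurable
  have aesm_gg : ∀ n, AEStronglyMeasurable (gg n) μ := fun n =>
    ((gg_sm n).mono (𝓕.le (n+1))).aestronglyMeasurable
  have int_M2 : ∀ n, Integrable (fun ω => (M n ω)^2) μ := by
    intro n
    apply int_of_bdd _ ((Cb n)^2) (((aesm_M n).mul (aesm_M n)).congr (by
      filter_upwards with ω; simp [sq]))
    filter_upwards [hMb] with ω hω
    calc |(M n ω)^2| = |M n ω|^2 := abs_pow _ _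
      _ ≤ (Cb n)^2 := pow_le_pow_left₀ (abs_nonneg _) (hω n) 2
  have int_gg2 : ∀ n, Integrable (fun ω => (gg n ω)^2) μ := by
    intro n
    apply int_of_bdd _ ((2/((n:ℝ)+1))^2) (((aesm_gg n).mul (aesm_gg n)).congr (by
      filter_upwards with ω; simp [sq]))
    filter_upwards [gg_bdd] with ω hω
    calc |(gg n ω)^2| = |gg n ω|^2 := abs_pow _ _
      _ ≤ (2/((n:ℝ)+1))^2 := pow_le_pow_left₀ (abs_nonneg _) (hω n) 2
  have int_Mgg : ∀ n, Integrable (fun ω => M n ω * gg n ω) μ := by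
    intro n
    apply int_of_bdd _ (Cb n * (2/((n:ℝ)+1))) ((aesm_M n).mul (aesm_gg n))
    filter_upwards [hMb, gg_bdd] with ω h1 h2
    simp only [Pi.mul_apply, abs_mul]
    exact mul_le_mul (h1 n) (h2 n) (abs_nonneg _) (hCb0 n)
  have hcross : ∀ n, ∫ ω, M n ω * gg n ω ∂μ = 0 := by
    intro n
    have hint_mg : Integrable (M n * gg n) μ := (int_Mgg n).congr (by
      filter_upwards with ω; rfl)
    have hpull := condExp_mul_of_stronglyMeasurable_left (hM_sm n) hint_mg (gg_int n)
    have h2 : μ[M n * gg n|𝓕 n] =ᵐ[μ] 0 := by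
      refine hpull.trans ?_
      filter_upwards [hcz n] with ω hω
      simp only [Pi.mul_apply, Pi.zero_apply] at *
      rw [hω]; ring
    calc ∫ ω, M n ω * gg n ω ∂μ = ∫ ω, (M n * gg n) ω ∂μ := rfl
      _ = ∫ ω, (μ[M n * gg n|𝓕 n]) ω ∂μ := (integral_condExp (𝓕.le n)).symm
      _ = ∫ _ω, (0:ℝ) ∂μ := integral_congr_ae h2
      _ = 0 := by simp
  have hM2' : ∀ n, ∫ ω, (M n ω)^2 ∂μ ≤ ∑ s ∈ Finset.range n, (2/((s:ℝ)+1))^2 := by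
    intro n
    induction n with
    | zero =>
      have hz : ∀ ω, M 0 ω = 0 := fun ω => by rw [hMdef]; simp
      simp [hz]
    | succ n ih =>
      have hexp : (fun ω => (M (n+1) ω)^2)
          = fun ω => ((M n ω)^2 + (2 * (M n ω * gg n ω) + (gg n ω)^2)) := by
        funext ω
        have h : M (n+1) ω = M n ω + gg n ω := by rw [hMsucc n]; simp
        rw [h]; ring
      have hgg2 : ∫ ω, (gg n ω)^2 ∂μ ≤ (2/((n:ℝ)+1))^2 := by
        have hb : (fun ω => (gg n ω)^2) ≤ᵐ[μ] fun _ => (2/((n:ℝ)+1))^2 := by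
          filter_upwards [gg_bdd] with ω hω
          calc (gg n ω)^2 = |gg n ω|^2 := (sq_abs _).symm
            _ ≤ (2/((n:ℝ)+1))^2 := pow_le_pow_left₀ (abs_nonneg _) (hω n) 2
        calc ∫ ω, (gg n ω)^2 ∂μ ≤ ∫ _ω, (2/((n:ℝ)+1))^2 ∂μ :=
              integral_mono_ae (int_gg2 n) (integrable_const _) hb
          _ = (2/((n:ℝ)+1))^2 := by simp
      have hsplit : ∫ ω, (M (n+1) ω)^2 ∂μ
          = (∫ ω, (M n ω)^2 ∂μ) + ((∫ ω, 2 * (M n ω * gg n ω) ∂μ) + ∫ ω, (gg n ω)^2 ∂μ) := by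
        have hI : Integrable (fun ω => 2 * (M n ω * gg n ω) + gg n ω^2) μ :=
          ((int_Mgg n).const_mul 2).add (int_gg2 n)
        rw [hexp]
        rw [integral_add (int_M2 n) hI, integral_add ((int_Mgg n).const_mul 2) (int_gg2 n)]
      have hc : ∫ ω, 2 * (M n ω * gg n ω) ∂μ = 0 := by
        rw [integral_const_mul, hcross n]; ring
      rw [hsplit, hc, Finset.sum_range_succ]
      linarith [hgg2]
  have hM2 : ∀ n, ∫ ω, (M n ω)^2 ∂μ ≤ 8 := by
    intro n
    have h1 : ∑ s ∈ Finset.range n, (2/((s:ℝ)+1))^2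
        = 4 * ∑ s ∈ Finset.range n, (1/((s:ℝ)+1))^2 := by
      rw [Finset.mul_sum]
      exact Finset.sum_congr rfl fun s _ => by ring
    have h2 := sumInvSq n
    have h3 := hM2' n
    rw [h1] at h3
    linarith
  have hL1 : ∀ n, eLpNorm (M n) 1 μ ≤ ENNReal.ofReal 5 := by
    intro n
    have hb : ∫ ω, ‖M n ω‖ ∂μ ≤ 5 := by
      have h1 : ∀ ω, ‖M n ω‖ ≤ ((M n ω)^2 + 1)/2 := fun ω => by
        rw [Real.norm_eq_abs]
        nlinarith [sq_abs (M n ω), sq_nonneg (|M n ω| - 1), abs_nonneg (M n ω)]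
      have h2 : ∫ ω, ‖M n ω‖ ∂μ ≤ ∫ ω, ((M n ω)^2 + 1)/2 ∂μ :=
        integral_mono_ae (hM_int n).norm
          (((int_M2 n).add (integrable_const 1)).div_const 2) (ae_of_all _ h1)
      have h3 : ∫ ω, ((M n ω)^2 + 1)/2 ∂μ = ((∫ ω, (M n ω)^2 ∂μ) + 1)/2 := by
        rw [integral_div, integral_add (int_M2 n) (integrable_const 1)]
        simp
      linarith [hM2 n]
    rw [eLpNorm_one_eq_lintegral_enorm, ← ofReal_integral_norm_eq_lintegral_enorm (hM_int n)]
    exact ENNReal.ofReal_le_ofReal hb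
  have hconv := hmart.submartingale.ae_tendsto_limitProcess (R := (5:ℝ).toNNReal) hL1
  filter_upwards [hconv] with ω hω
  refine ⟨𝓕.limitProcess M μ ω, ?_⟩
  have heq : (fun n => ∑ s ∈ Finset.range n,
      (if s = 0 then (0:ℝ) else (((s:ℝ)+1)⁻¹ * (ξ s ω - cond s ω)))) = fun n => M n ω := by
    funext n
    rw [hMdef]
    simp only [Finset.sum_apply]
    refine Finset.sum_congr rfl fun s _ => ?_
    rw [hggdef]
    by_cases h : s = 0 <;> simp [h]
  rw [heq]
  exact hω

/-- **Lemma 1 (BUD asymptotics, stochastic approximation lemma).**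
Let `(Ω, 𝓖, μ)` be a probability space with a filtration `(𝓕 t)`, and `(A t)` a
sequence of `{0,1}`-valued random variables adapted to the filtration. With
`p̂ t ω` the proportion of the first `t` assignments equal to `0`, `π t` a version
of the conditional probability `P(A (t+1) = 0 | 𝓕 t)`, and `F t = π t - p̂ t`,
if almost surely for every `ε > 0` there are a (random) time `T` and a constant
`c > 0` such that for all `t > T`, `F t < -c` whenever `p̂ t > ρ₀ + ε` and
`F t > c` whenever `p̂ t < ρ₀ - ε`, then `p̂ t → ρ₀` almost surely. -/
theorem stmt_0
    {Ω : Type*} {𝓖 : MeasurableSpace Ω} {μ : Measure Ω} [IsProbabilityMeasure μ]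
    (𝓕 : Filtration ℕ 𝓖)
    (A : ℕ → Ω → ℕ) (hA01 : ∀ t ω, A t ω = 0 ∨ A t ω = 1)
    (hA_adapted : ∀ t, Measurable[𝓕 t] (A t))
    (phat : ℕ → Ω → ℝ)
    (h_phat : ∀ t ≥ 1, ∀ ω,
      phat t ω = ((Finset.Icc 1 t).filter (fun s => A s ω = 0)).card / t)
    (π : ℕ → Ω → ℝ)
    (hπ : ∀ t ≥ 1, π t =ᵐ[μ]
      μ[Set.indicator {ω | A (t + 1) ω = 0} (fun _ => (1 : ℝ)) | 𝓕 t])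
    (F : ℕ → Ω → ℝ) (hF : ∀ t ≥ 1, ∀ ω, F t ω = π t ω - phat t ω)
    (ρ₀ : ℝ) (hρ₀ : ρ₀ ∈ Set.Icc (0 : ℝ) 1)
    (h_drift : ∀ᵐ ω ∂μ, ∀ ε > (0 : ℝ), ∃ T : ℕ, ∃ c > (0 : ℝ), ∀ t > T,
      (phat t ω > ρ₀ + ε → F t ω < -c) ∧ (phat t ω < ρ₀ - ε → F t ω > c)) :
    ∀ᵐ ω ∂μ, Tendsto (fun t => phat t ω) atTop (nhds ρ₀) := by

  classical
  set ξ : ℕ → Ω → ℝ := fun t => Set.indicator {ω | A (t + 1) ω = 0} (fun _ => (1 : ℝ))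
    with hξdef
  have hξmeas : ∀ t, Measurable[𝓕 (t+1)] (ξ t) := by
    intro t
    have hs : MeasurableSet[𝓕 (t+1)] {ω | A (t+1) ω = 0} :=
      (hA_adapted (t+1)) (measurableSet_singleton 0)
    exact measurable_const.indicator hs
  have hξval : ∀ t ω, ξ t ω = if A (t+1) ω = 0 then (1:ℝ) else 0 := by
    intro t ω
    rw [hξdef]
    simp [Set.indicator_apply]
  have hξbdd : ∀ t ω, |ξ t ω| ≤ 1 := by
    intro t ω
    rw [hξval]
    by_cases h : A (t+1) ω = 0 <;> simp [h]
  have hξ01 : ∀ t ω, 0 ≤ ξ t ω ∧ ξ t ω ≤ 1 := by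
    intro t ω
    rw [hξval]
    by_cases h : A (t+1) ω = 0 <;> simp [h]
  have hnoise := noise_conv (μ := μ) 𝓕 ξ hξmeas hξbdd
  have hπ' : ∀ᵐ ω ∂μ, ∀ t, 1 ≤ t → π t ω = (μ[ξ t | 𝓕 t]) ω := by
    rw [ae_all_iff]
    intro t
    by_cases h : 1 ≤ t
    · filter_upwards [hπ t h] with ω hω _
      exact hω
    · filter_upwards with ω h'
      exact absurd h' h
  filter_upwards [hnoise, hπ', h_drift] with ω hω1 hω2 hω3
  -- pathwise quantities
  have hx01 : ∀ t, 1 ≤ t → 0 ≤ phat t ω ∧ phat t ω ≤ 1 := by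
    intro t ht
    rw [h_phat t ht ω]
    have hcard : ((Finset.Icc 1 t).filter (fun s => A s ω = 0)).card ≤ t := by
      calc ((Finset.Icc 1 t).filter (fun s => A s ω = 0)).card
          ≤ (Finset.Icc 1 t).card := Finset.card_filter_le _ _
        _ = t := by rw [Nat.card_Icc]; omega
    have htpos : (0:ℝ) < t := by exact_mod_cast ht
    constructor
    · positivity
    · rw [div_le_one htpos]
      exact_mod_cast hcard
  have hrec : ∀ t, 1 ≤ t → phat (t+1) ω = phat t ω + (ξ t ω - phat t ω)/((t:ℝ)+1) := by
    intro t ht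
    have hins : Finset.Icc 1 (t+1) = insert (t+1) (Finset.Icc 1 t) := by
      ext s
      simp only [Finset.mem_Icc, Finset.mem_insert]
      omega
    have hcard : ((Finset.Icc 1 (t+1)).filter (fun s => A s ω = 0)).card
        = ((Finset.Icc 1 t).filter (fun s => A s ω = 0)).card
          + (if A (t+1) ω = 0 then 1 else 0) := by
      rw [hins, Finset.filter_insert]
      by_cases h : A (t+1) ω = 0
      · rw [if_pos h, if_pos h, Finset.card_insert_of_notMem (by simp)]
      · rw [if_neg h, if_neg h, Nat.add_zero]
    rw [h_phat (t+1) (by omega) ω, h_phat t ht ω, hcard, hξval]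
    have htpos : (0:ℝ) < t := by exact_mod_cast ht
    have ht1pos : (0:ℝ) < (t:ℝ)+1 := by linarith
    push_cast
    by_cases h : A (t+1) ω = 0 <;> simp only [h, if_true, if_false] <;> field_simp <;> ring
  -- apply deterministic lemma (upper)
  have hup := detUpper (fun t => phat t ω) (fun t => F t ω) (fun t => ξ t ω - π t ω) ρ₀ 0
    (fun t ht => (hx01 t ht).1)
    (by
      intro t ht
      have hFe := hF t ht ω
      show phat (t+1) ω = phat t ω + (F t ω + (ξ t ω - π t ω))/((t:ℝ)+1)
      rw [hrec t ht, hFe]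
      ring_nf)
    (by
      intro t ht
      have hFe := hF t ht ω
      show |F t ω + (ξ t ω - π t ω)| ≤ 1
      rw [hFe]
      have h1 := hξ01 t ω
      have h2 := hx01 t ht
      rw [abs_le]
      constructor <;> nlinarith [h1.1, h1.2, h2.1, h2.2])
    (by
      obtain ⟨L, hL⟩ := hω1
      refine ⟨L, ?_⟩
      have heq : ∀ n, (∑ s ∈ Finset.Icc 1 n, (ξ s ω - π s ω)/((s:ℝ)+1))
          = ∑ s ∈ Finset.range (n+1),
            (if s = 0 then (0:ℝ) else (((s:ℝ)+1)⁻¹ * (ξ s ω - (μ[ξ s | 𝓕 s]) ω))) := by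
        intro n
        rw [Finset.range_eq_Ico,
          ← Finset.sum_Ico_consecutive _ (Nat.zero_le 1) (by omega : 1 ≤ n+1)]
        have h0 : ∑ s ∈ Finset.Ico (0:ℕ) 1,
            (if s = 0 then (0:ℝ) else (((s:ℝ)+1)⁻¹ * (ξ s ω - (μ[ξ s | 𝓕 s]) ω))) = 0 := by
          simp
        rw [h0, zero_add]
        rw [Finset.Ico_add_one_right_eq_Icc]
        refine Finset.sum_congr rfl fun s hs => ?_
        obtain ⟨hs1, _⟩ := Finset.mem_Icc.1 hs
        rw [if_neg (by omega), ← hω2 s hs1, div_eq_inv_mul]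
      have hshift : Tendsto (fun n => ∑ s ∈ Finset.range (n+1),
          (if s = 0 then (0:ℝ) else (((s:ℝ)+1)⁻¹ * (ξ s ω - (μ[ξ s | 𝓕 s]) ω))))
          atTop (nhds L) := hL.comp (tendsto_add_atTop_nat 1)
      exact (tendsto_congr heq).2 hshift)
    (by
      intro ε hε
      obtain ⟨T, c, hc, hdr⟩ := hω3 ε hε
      exact ⟨T, c, hc, fun t ht hx => (hdr t ht).1 hx⟩)
  -- apply deterministic lemma (lower, via negation)
  have hlow := detUpper (fun t => -phat t ω) (fun t => -F t ω) (fun t => -(ξ t ω - π t ω))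
    (-ρ₀) (-1)
    (fun t ht => by
      show (-1:ℝ) ≤ -phat t ω
      linarith [(hx01 t ht).2])
    (by
      intro t ht
      have hFe := hF t ht ω
      have hr := hrec t ht
      show -phat (t+1) ω = -phat t ω + (-F t ω + -(ξ t ω - π t ω))/((t:ℝ)+1)
      rw [hr, hFe]
      ring)
    (by
      intro t ht
      have hFe := hF t ht ω
      show |-F t ω + -(ξ t ω - π t ω)| ≤ 1
      rw [hFe]
      have h1 := hξ01 t ω
      have h2 := hx01 t ht
      rw [abs_le]
      constructor <;> nlinarith [h1.1, h1.2, h2.1, h2.2])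
    (by
      obtain ⟨L, hL⟩ := hω1
      refine ⟨-L, ?_⟩
      have heq : ∀ n, (∑ s ∈ Finset.Icc 1 n, (-(ξ s ω - π s ω))/((s:ℝ)+1))
          = -∑ s ∈ Finset.Icc 1 n, (ξ s ω - π s ω)/((s:ℝ)+1) := by
        intro n
        rw [← Finset.sum_neg_distrib]
        exact Finset.sum_congr rfl fun s _ => by ring
      have hL' : Tendsto (fun n => ∑ s ∈ Finset.Icc 1 n, (ξ s ω - π s ω)/((s:ℝ)+1))
          atTop (nhds L) := by
        have heq2 : ∀ n, (∑ s ∈ Finset.Icc 1 n, (ξ s ω - π s ω)/((s:ℝ)+1))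
            = ∑ s ∈ Finset.range (n+1),
              (if s = 0 then (0:ℝ) else (((s:ℝ)+1)⁻¹ * (ξ s ω - (μ[ξ s | 𝓕 s]) ω))) := by
          intro n
          rw [Finset.range_eq_Ico,
            ← Finset.sum_Ico_consecutive _ (Nat.zero_le 1) (by omega : 1 ≤ n+1)]
          have h0 : ∑ s ∈ Finset.Ico (0:ℕ) 1,
              (if s = 0 then (0:ℝ) else (((s:ℝ)+1)⁻¹ * (ξ s ω - (μ[ξ s | 𝓕 s]) ω))) = 0 := by
            simp
          rw [h0, zero_add]
          rw [Finset.Ico_add_one_right_eq_Icc]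
          refine Finset.sum_congr rfl fun s hs => ?_
          obtain ⟨hs1, _⟩ := Finset.mem_Icc.1 hs
          rw [if_neg (by omega), ← hω2 s hs1, div_eq_inv_mul]
        exact (tendsto_congr heq2).2 (hL.comp (tendsto_add_atTop_nat 1))
      exact (tendsto_congr heq).2 hL'.neg)
    (by
      intro ε hε
      obtain ⟨T, c, hc, hdr⟩ := hω3 ε hε
      refine ⟨T, c, hc, fun t ht hx => ?_⟩
      have hx0 : -phat t ω > -ρ₀ + ε := hx
      have hx' : phat t ω < ρ₀ - ε := by linarith
      have hgt := (hdr t ht).2 hx'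
      show -F t ω < -c
      linarith)
  rw [Metric.tendsto_atTop]
  intro ε hε
  obtain ⟨N₁, hN₁⟩ := hup ε hε
  obtain ⟨N₂, hN₂⟩ := hlow ε hε
  refine ⟨max N₁ N₂, fun t ht => ?_⟩
  have h1 : phat t ω < ρ₀ + ε := hN₁ t (le_trans (le_max_left _ _) ht)
  have h2 : -phat t ω < -ρ₀ + ε := hN₂ t (le_trans (le_max_right _ _) ht)
  rw [Real.dist_eq, abs_sub_lt_iff]
  constructor <;> linarith
end

section
/- Fix K ≥ 1 and for t ≥ 1 let (p̂_{0,t}, …, p̂_{K,t}) be nonnegative real numbers with Σ_{a=0}^K p̂_{a,t} = 1. Suppose that for every ordered pair of distinct indices a₁ ≠ a₂ in {0,…,K} there is a number ρ̃_{a₁,a₂} ∈ (0,1) such that p̂_{a₁,t}/(p̂_{a₁,t} + p̂_{a₂,t}) → ρ̃_{a₁,a₂} as t → ∞ (in particular p̂_{a₁,t} + p̂_{a₂,t} > 0 for all sufficiently large t, for every pair). Then there exists a vector ρ = (ρ_0, …, ρ_K) with ρ_a ∈ (0,1) for all a, Σ_{a=0}^K ρ_a = 1, and ρ_{a₁} =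 ρ̃_{a₁,a₂}·(ρ_{a₁} + ρ_{a₂}) for all pairs a₁ ≠ a₂, such that p̂_{a,t} → ρ_a as t → ∞ for every a = 0, …, K. -/
open Filter

/-- **Remark 1 (deterministic content).** If all pairwise allocation proportions
`p̂ a₁ t / (p̂ a₁ t + p̂ a₂ t)` converge to limits `ρ̃ a₁ a₂ ∈ (0,1)`, then the whole
vector of allocation proportions converges to a vector `ρ` with entries in `(0,1)`,
summing to one, and solving `ρ a₁ = ρ̃ a₁ a₂ · (ρ a₁ + ρ a₂)` for all pairs. -/
theorem stmt_1 (K : ℕ) (hK : 1 ≤ K)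
    (phat : ℕ → Fin (K + 1) → ℝ)
    (h_nonneg : ∀ t ≥ 1, ∀ a, 0 ≤ phat t a)
    (h_sum : ∀ t ≥ 1, ∑ a, phat t a = 1)
    (ρt : Fin (K + 1) → Fin (K + 1) → ℝ)
    (hρt_mem : ∀ a₁ a₂, a₁ ≠ a₂ → ρt a₁ a₂ ∈ Set.Ioo (0 : ℝ) 1)
    (h_pos : ∀ a₁ a₂, a₁ ≠ a₂ → ∀ᶠ t in atTop, 0 < phat t a₁ + phat t a₂)
    (h_conv : ∀ a₁ a₂, a₁ ≠ a₂ →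
      Tendsto (fun t => phat t a₁ / (phat t a₁ + phat t a₂)) atTop (nhds (ρt a₁ a₂))) :
    ∃ ρ : Fin (K + 1) → ℝ,
      (∀ a, ρ a ∈ Set.Ioo (0 : ℝ) 1) ∧
      (∑ a, ρ a = 1) ∧
      (∀ a₁ a₂, a₁ ≠ a₂ → ρ a₁ = ρt a₁ a₂ * (ρ a₁ + ρ a₂)) ∧
      (∀ a, Tendsto (fun t => phat t a) atTop (nhds (ρ a))) := by
  classical
  set r : Fin (K + 1) → ℝ := fun a => if a = 0 then 1 else ρt a 0 / (1 - ρt a 0) with hr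
  have hr_pos : ∀ a, 0 < r a := by
    intro a
    by_cases h : a = 0
    · simp [hr, h]
    · have hm := hρt_mem a 0 h
      have h1 : 0 < 1 - ρt a 0 := by linarith [hm.2]
      simp only [hr, h, if_false]
      exact div_pos hm.1 h1
  set S : ℝ := ∑ a, r a with hS
  have hS_pos : 0 < S :=
    Finset.sum_pos (fun a _ => hr_pos a) ⟨0, Finset.mem_univ 0⟩
  -- a second index distinct from 0
  have hb : (⟨1, by omega⟩ : Fin (K + 1)) ≠ 0 := by
    intro h
    simpa using congrArg Fin.val h
  -- eventual positivity of phat t 0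
  have h0pos : ∀ᶠ t in atTop, 0 < phat t 0 := by
    have hne : (0 : Fin (K + 1)) ≠ ⟨1, by omega⟩ := hb.symm
    have hc := h_conv 0 _ hne
    have hpos := h_pos 0 _ hne
    have hρ := (hρt_mem 0 _ hne).1
    have hev : ∀ᶠ t in atTop,
        ρt 0 ⟨1, by omega⟩ / 2 < phat t 0 / (phat t 0 + phat t ⟨1, by omega⟩) :=
      hc.eventually (eventually_gt_nhds (by linarith))
    filter_upwards [hpos, hev] with t h1 h2
    have h3 : 0 < phat t 0 / (phat t 0 + phat t ⟨1, by omega⟩) := by linarith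
    have h4 := mul_pos h3 h1
    rwa [div_mul_cancel₀ _ h1.ne'] at h4
  -- ratio convergence
  have hratio : ∀ a, Tendsto (fun t => phat t a / phat t 0) atTop (nhds (r a)) := by
    intro a
    by_cases h : a = 0
    · subst h
      have heq : (fun _ : ℕ => (1 : ℝ)) =ᶠ[atTop] fun t => phat t 0 / phat t 0 := by
        filter_upwards [h0pos] with t ht
        simp [div_self ht.ne']
      have := tendsto_const_nhds.congr' heq
      simpa [hr] using this
    · have hconv1 := h_conv a 0 h
      have hpos1 := h_pos a 0 h
      have hconv2 : Tendsto (fun t => phat t 0 / (phat t a + phat t 0)) atTop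
          (nhds (1 - ρt a 0)) := by
        have heq : (fun t => 1 - phat t a / (phat t a + phat t 0)) =ᶠ[atTop]
            fun t => phat t 0 / (phat t a + phat t 0) := by
          filter_upwards [hpos1] with t ht
          field_simp
          ring
        exact (tendsto_const_nhds.sub hconv1).congr' heq
      have hne : (1 : ℝ) - ρt a 0 ≠ 0 := by
        have := (hρt_mem a 0 h).2; linarith
      have hdiv := hconv1.div hconv2 hne
      have heq : (fun t => (phat t a / (phat t a + phat t 0)) /
          (phat t 0 / (phat t a + phat t 0))) =ᶠ[atTop] fun t => phat t a / phat t 0 := by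
        filter_upwards [hpos1] with t ht
        rw [div_div_div_cancel_right₀]
        exact ht.ne'
      have := hdiv.congr' heq
      simpa [hr, h] using this
  -- phat t 0 → 1 / S
  have hinv : Tendsto (fun t => phat t 0) atTop (nhds (1 / S)) := by
    have hsumratio : Tendsto (fun t => ∑ a, phat t a / phat t 0) atTop (nhds S) := by
      rw [hS]
      exact tendsto_finset_sum _ fun a _ => hratio a
    have heq : (fun t => ∑ a, phat t a / phat t 0) =ᶠ[atTop] fun t => 1 / phat t 0 := by
      filter_upwards [eventually_ge_atTop 1] with t ht
      rw [← Finset.sum_div, h_sum t ht]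
    have h2 : Tendsto (fun t => 1 / phat t 0) atTop (nhds S) := hsumratio.congr' heq
    have h3 := h2.inv₀ hS_pos.ne'
    simp only [one_div, inv_inv] at h3
    simpa [one_div] using h3
  -- convergence of each coordinate
  have hconv_a : ∀ a, Tendsto (fun t => phat t a) atTop (nhds (r a / S)) := by
    intro a
    have hmul := (hratio a).mul hinv
    have heq : (fun t => (phat t a / phat t 0) * phat t 0) =ᶠ[atTop]
        fun t => phat t a := by
      filter_upwards [h0pos] with t ht
      rw [div_mul_cancel₀ _ ht.ne']
    have := hmul.congr' heq
    simpa [mul_one_div, div_eq_mul_inv] using this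
  -- r a < S
  have hlt : ∀ a, r a < S := by
    intro a
    obtain ⟨b, hba⟩ : ∃ b : Fin (K + 1), b ≠ a := by
      by_cases h : a = 0
      · exact ⟨⟨1, by omega⟩, by rw [h]; exact hb⟩
      · exact ⟨0, Ne.symm h⟩
    exact Finset.single_lt_sum hba (Finset.mem_univ a) (Finset.mem_univ b)
      (hr_pos b) (fun k _ _ => (hr_pos k).le)
  refine ⟨fun a => r a / S, ?_, ?_, ?_, hconv_a⟩
  · intro a
    exact ⟨div_pos (hr_pos a) hS_pos, (div_lt_one hS_pos).mpr (hlt a)⟩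
  · rw [← Finset.sum_div, ← hS, div_self hS_pos.ne']
  · intro a₁ a₂ hne
    have hsum_pos : 0 < r a₁ / S + r a₂ / S :=
      add_pos (div_pos (hr_pos a₁) hS_pos) (div_pos (hr_pos a₂) hS_pos)
    have hlim : Tendsto (fun t => phat t a₁ / (phat t a₁ + phat t a₂)) atTop
        (nhds ((r a₁ / S) / (r a₁ / S + r a₂ / S))) :=
      (hconv_a a₁).div ((hconv_a a₁).add (hconv_a a₂)) hsum_pos.ne'
    have huniq := tendsto_nhds_unique (h_conv a₁ a₂ hne) hlim
    show r a₁ / S = ρt a₁ a₂ * (r a₁ / S + r a₂ / S)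
    rw [huniq]
    exact (div_mul_cancel₀ _ hsum_pos.ne').symm
end

section
/- Let σ > 0, σ_0 > 0, σ_1 > 0 and h ≥ 0. For a = 0,1 define Δ_a(n) = σ_a² / ((σ_a²/σ² + n)(σ_a²/σ² + 1 + n)) for n ∈ ℕ. Let (Ω, 𝓖, μ) be a probability space with a filtration (𝓕_t)_{t≥1} and let (A_t)_{t≥1} be {0,1}-valued random variables with A_t measurable with respect to 𝓕_t. Let N_a(t) = #{s ≤ t : A_s = a} be the number of the first t assignments to arm a, and assume that for every t ≥ 1, P(A_{t+1} = 0 | 𝓕_t) = Δ_0(N_0(t))^h / (Δ_0(N_0(t))^h + Δ_1(N_1(t))^h) almost surely. Then, almost surely, N_0(t)/t → σ_0^{2h/(1+2h)} / (σ_0^{2h/(1+2h)} + σ_1^{2h/(1+2h)}) as t → ∞. -/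
open MeasureTheory Filter

/-- The expected one-step information gain of an arm with sampling variance `σa²`
after `n` observations, under a `N(0, σ²)` prior:
`Δ(n) = σa² / ((σa²/σ² + n) (σa²/σ² + 1 + n))`. -/
noncomputable def budGain (σ σa : ℝ) (n : ℕ) : ℝ :=
  σa ^ 2 / ((σa ^ 2 / σ ^ 2 + n) * (σa ^ 2 / σ ^ 2 + 1 + n))

lemma pow_two_rpow' {x h : ℝ} (hx : 0 ≤ x) : (x ^ (2:ℕ)) ^ h = x ^ (2*h) := by
  rw [← Real.rpow_natCast x 2, ← Real.rpow_mul hx]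
  norm_num

lemma budGain_pos {σ σa : ℝ} (hσ : 0 < σ) (ha : 0 < σa) (n : ℕ) :
    0 < budGain σ σa n := by
  unfold budGain
  have h1 : 0 < σa ^ 2 / σ ^ 2 := by positivity
  have h2 : (0:ℝ) ≤ n := Nat.cast_nonneg n
  positivity

/-- `budGain σ σa n ^ h ≤ σa^(2h) / n^(2h)` for `n ≥ 1`. -/
lemma budGain_rpow_le {σ σa h : ℝ} (hσ : 0 < σ) (ha : 0 < σa) (hh : 0 ≤ h)
    {n : ℕ} (hn : 1 ≤ n) :
    budGain σ σa n ^ h ≤ σa ^ (2*h) / (n:ℝ) ^ (2*h) := by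
  have hk : 0 < σa ^ 2 / σ ^ 2 := by positivity
  have hnR : (1:ℝ) ≤ (n:ℝ) := by exact_mod_cast hn
  have hnpos : (0:ℝ) < n := by linarith
  have hDa : ((n:ℝ))^(2:ℕ) ≤ (σa ^ 2 / σ ^ 2 + n) * (σa ^ 2 / σ ^ 2 + 1 + n) := by
    have : ((n:ℝ))^(2:ℕ) = (n:ℝ) * (n:ℝ) := sq (n:ℝ) ▸ by ring
    nlinarith
  have hDapos : (0:ℝ) < (σa ^ 2 / σ ^ 2 + n) * (σa ^ 2 / σ ^ 2 + 1 + n) := by positivity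
  have h1 : budGain σ σa n ≤ σa ^ 2 / ((n:ℝ))^(2:ℕ) := by
    unfold budGain
    gcongr
  have h2 : budGain σ σa n ^ h ≤ (σa ^ 2 / ((n:ℝ))^(2:ℕ)) ^ h :=
    Real.rpow_le_rpow (le_of_lt (budGain_pos hσ ha n)) h1 hh
  refine h2.trans_eq ?_
  rw [Real.div_rpow (by positivity) (by positivity),
    pow_two_rpow' ha.le, pow_two_rpow' hnpos.le]

/-- `budGain σ σa n ^ h ≥ σa^(2h) / (n + (σa²/σ² + 1))^(2h)`. -/
lemma budGain_rpow_ge {σ σa h : ℝ} (hσ : 0 < σ) (ha : 0 < σa) (hh : 0 ≤ h) (n : ℕ) :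
    σa ^ (2*h) / ((n:ℝ) + (σa ^ 2 / σ ^ 2 + 1)) ^ (2*h) ≤ budGain σ σa n ^ h := by
  have hk : 0 < σa ^ 2 / σ ^ 2 := by positivity
  have hnn : (0:ℝ) ≤ n := Nat.cast_nonneg n
  have hKpos : (0:ℝ) < (n:ℝ) + (σa ^ 2 / σ ^ 2 + 1) := by positivity
  have hDa : (σa ^ 2 / σ ^ 2 + n) * (σa ^ 2 / σ ^ 2 + 1 + n) ≤ ((n:ℝ) + (σa ^ 2 / σ ^ 2 + 1))^(2:ℕ) := by
    nlinarith
  have h1 : σa ^ 2 / ((n:ℝ) + (σa ^ 2 / σ ^ 2 + 1))^(2:ℕ) ≤ budGain σ σa n := by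
    unfold budGain
    gcongr
  have h2 : (σa ^ 2 / ((n:ℝ) + (σa ^ 2 / σ ^ 2 + 1))^(2:ℕ)) ^ h ≤ budGain σ σa n ^ h :=
    Real.rpow_le_rpow (by positivity) h1 hh
  refine le_trans (le_of_eq ?_) h2
  rw [Real.div_rpow (by positivity) (by positivity),
    pow_two_rpow' ha.le, pow_two_rpow' hKpos.le]

/-- Key algebraic step: if `u ≤ (σ₀/σ₁)·(σ₁^r/σ₀^r)·v` then `σ₁^r u^(2h) ≤ σ₀^r v^(2h)`,
where `r = 2h/(1+2h)`. -/
lemma budKey {σ₀ σ₁ h : ℝ} (h0 : 0 < σ₀) (h1 : 0 < σ₁) (hh : 0 ≤ h)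
    {u v : ℝ} (hu : 0 ≤ u)
    (huv : u ≤ (σ₀/σ₁) * (σ₁ ^ (2*h/(1+2*h)) / σ₀ ^ (2*h/(1+2*h))) * v) :
    σ₁ ^ (2*h/(1+2*h)) * u ^ (2*h) ≤ σ₀ ^ (2*h/(1+2*h)) * v ^ (2*h) := by
  set r := 2*h/(1+2*h) with hr
  have hX : (0:ℝ) < σ₀ / σ₁ := by positivity
  have hB : (0:ℝ) < (σ₀/σ₁) * (σ₁ ^ r / σ₀ ^ r) := by positivity
  have hv : 0 ≤ v := by
    by_contra hvn
    push_neg at hvn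
    nlinarith
  have h2 : u ^ (2*h) ≤ ((σ₀/σ₁) * (σ₁ ^ r / σ₀ ^ r) * v) ^ (2*h) :=
    Real.rpow_le_rpow hu huv (by linarith)
  have h3 : ((σ₀/σ₁) * (σ₁ ^ r / σ₀ ^ r) * v) ^ (2*h)
      = ((σ₀/σ₁) * (σ₁ ^ r / σ₀ ^ r)) ^ (2*h) * v ^ (2*h) :=
    Real.mul_rpow hB.le hv
  have hBval : ((σ₀/σ₁) * (σ₁ ^ r / σ₀ ^ r)) ^ (2*h) = σ₀ ^ r / σ₁ ^ r := by
    have hXr : σ₁ ^ r / σ₀ ^ r = (σ₀/σ₁) ^ (-r) := by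
      rw [Real.rpow_neg hX.le, Real.div_rpow h0.le h1.le]
      rw [inv_div]
    have e1 : (σ₀/σ₁) * ((σ₀/σ₁) ^ (-r)) = (σ₀/σ₁) ^ (1 + -r) := by
      rw [Real.rpow_add hX, Real.rpow_one]
    have hexp : (1 + -r) * (2*h) = r := by
      have hden : (1:ℝ) + 2*h ≠ 0 := by positivity
      rw [hr]
      field_simp
      ring
    rw [hXr, e1, ← Real.rpow_mul hX.le, hexp, Real.div_rpow h0.le h1.le]
  have h4 : σ₁ ^ r * u ^ (2*h) ≤ σ₁ ^ r * ((σ₀ ^ r / σ₁ ^ r) * v ^ (2*h)) := by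
    have hs : (0:ℝ) ≤ σ₁ ^ r := (Real.rpow_pos_of_pos h1 r).le
    have := h2.trans_eq (h3.trans (by rw [hBval]))
    exact mul_le_mul_of_nonneg_left this hs
  refine h4.trans_eq ?_
  have hs : σ₁ ^ r ≠ 0 := (Real.rpow_pos_of_pos h1 r).ne'
  field_simp

lemma budKey' {σ₀ σ₁ h A B u v : ℝ} (h0 : 0 < σ₀) (h1 : 0 < σ₁) (hh : 0 ≤ h)
    (hA : A = σ₀ ^ (2*h/(1+2*h))) (hB : B = σ₁ ^ (2*h/(1+2*h)))
    (hu : 0 ≤ u) (huv : u ≤ (σ₀/σ₁) * (B/A) * v) :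
    B * u ^ (2*h) ≤ A * v ^ (2*h) := by
  subst hA
  subst hB
  exact budKey h0 h1 hh hu huv

section
variable (σ σ₀ σ₁ h ε : ℝ)

lemma budDrift_upper (hσ : 0 < σ) (hσ₀ : 0 < σ₀) (hσ₁ : 0 < σ₁)
    (hh : 0 ≤ h) (hε : 0 < ε) :
    ∃ T₀ : ℕ, 1 ≤ T₀ ∧ ∀ t n m : ℕ, T₀ ≤ t → n + m = t →
      σ₀ ^ (2*h/(1+2*h)) / (σ₀ ^ (2*h/(1+2*h)) + σ₁ ^ (2*h/(1+2*h))) + ε ≤ (n:ℝ)/t →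
      budGain σ σ₀ n ^ h / (budGain σ σ₀ n ^ h + budGain σ σ₁ m ^ h) ≤
        σ₀ ^ (2*h/(1+2*h)) / (σ₀ ^ (2*h/(1+2*h)) + σ₁ ^ (2*h/(1+2*h))) := by
  obtain ⟨A, hA⟩ : ∃ x, x = σ₀ ^ (2*h/(1+2*h)) := ⟨_, rfl⟩
  obtain ⟨B, hB⟩ : ∃ x, x = σ₁ ^ (2*h/(1+2*h)) := ⟨_, rfl⟩
  rw [← hA, ← hB]
  have hApos : 0 < A := hA ▸ Real.rpow_pos_of_pos hσ₀ _
  have hBpos : 0 < B := hB ▸ Real.rpow_pos_of_pos hσ₁ _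
  obtain ⟨L, hL⟩ : ∃ x, x = A / (A+B) := ⟨_, rfl⟩
  rw [← hL]
  have hABpos : (0:ℝ) < A + B := by linarith
  have hLpos : 0 < L := by rw [hL]; exact div_pos hApos hABpos
  have hL1 : L < 1 := by rw [hL, div_lt_one hABpos]; linarith
  have hLdef : L*(A+B) = A := by rw [hL, div_mul_cancel₀ _ (ne_of_gt hABpos)]
  obtain ⟨K, hK⟩ : ∃ x, x = σ₁ ^ 2 / σ ^ 2 + 1 := ⟨_, rfl⟩
  have hKpos : 0 < K := by rw [hK]; positivity
  refine ⟨max 1 ⌈2*K/ε⌉₊, le_max_left _ _, ?_⟩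
  intro t n m ht hnm hge
  have ht1 : 1 ≤ t := le_trans (le_max_left _ _) ht
  have htR : (1:ℝ) ≤ t := by exact_mod_cast ht1
  have htpos : (0:ℝ) < t := by linarith
  have hKt : K ≤ ε/2 * t := by
    have h1 : (⌈2*K/ε⌉₊ : ℝ) ≤ t := by exact_mod_cast le_trans (le_max_right _ _) ht
    have h2 : 2*K/ε ≤ t := le_trans (Nat.le_ceil _) h1
    have h3 : 2*K ≤ t*ε := (div_le_iff₀ hε).mp h2
    linarith only [h3]
  have hmR : (m:ℝ) = t - n := by
    have : (n:ℝ) + m = t := by exact_mod_cast hnm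
    linarith
  have hnge : (L + ε) * t ≤ n := (le_div_iff₀ htpos).mp hge
  have hnRpos : (0:ℝ) < n :=
    lt_of_lt_of_le (mul_pos (by linarith : (0:ℝ) < L + ε) htpos) hnge
  have hn1 : 1 ≤ n := by
    rcases Nat.eq_zero_or_pos n with h0 | h1
    · rw [h0] at hnRpos; simp at hnRpos
    · exact h1
  have hapos : 0 < budGain σ σ₀ n ^ h :=
    Real.rpow_pos_of_pos (budGain_pos hσ hσ₀ n) h
  have hbpos : 0 < budGain σ σ₁ m ^ h :=
    Real.rpow_pos_of_pos (budGain_pos hσ hσ₁ m) h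
  have hmain : B * budGain σ σ₀ n ^ h ≤ A * budGain σ σ₁ m ^ h := by
    have ha_le : budGain σ σ₀ n ^ h ≤ σ₀ ^ (2*h) / (n:ℝ) ^ (2*h) :=
      budGain_rpow_le hσ hσ₀ hh hn1
    have hb_ge : σ₁ ^ (2*h) / ((m:ℝ) + K) ^ (2*h) ≤ budGain σ σ₁ m ^ h := by
      rw [hK]; exact budGain_rpow_ge hσ hσ₁ hh m
    have hnpow : 0 < (n:ℝ) ^ (2*h) := Real.rpow_pos_of_pos hnRpos _
    have hmKpow : 0 < ((m:ℝ) + K) ^ (2*h) :=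
      Real.rpow_pos_of_pos (add_pos_of_nonneg_of_pos (Nat.cast_nonneg m) hKpos) _
    have huv : σ₀ * ((m:ℝ) + K) ≤ (σ₀/σ₁) * (B/A) * (σ₁ * (n:ℝ)) := by
      have hstep1 : (m:ℝ) + K ≤ (1 - L - ε/2) * t := by
        linarith only [hnge, hKt, hmR]
      have hnum : (1 - L - ε/2) * A ≤ B * (L + ε) := by
        linarith only [hLdef, (mul_pos hε hApos).le, (mul_pos hε hBpos).le]
      have h6 := mul_le_mul_of_nonneg_left hnum (show (0:ℝ) ≤ σ₀ * t by positivity)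
      have hstep2 : σ₀ * ((1 - L - ε/2)*t) ≤ (σ₀ * (B/A)) * ((L+ε)*t) := by
        rw [← mul_le_mul_iff_of_pos_right hApos]
        calc σ₀ * ((1-L-ε/2)*t) * A = σ₀ * t * ((1-L-ε/2)*A) := by ring
          _ ≤ σ₀ * t * (B*(L+ε)) := h6
          _ = (σ₀ * (B/A)) * ((L+ε)*t) * A := by
              have hAne : A ≠ 0 := ne_of_gt hApos
              field_simp
      have hstep3 : (σ₀ * (B/A)) * ((L+ε)*t) ≤ (σ₀ * (B/A)) * n :=
        mul_le_mul_of_nonneg_left hnge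
          (mul_nonneg hσ₀.le (div_nonneg hBpos.le hApos.le))
      have heq : (σ₀/σ₁) * (B/A) * (σ₁ * (n:ℝ)) = (σ₀ * (B/A)) * n := by
        have hAne : A ≠ 0 := ne_of_gt hApos
        have h1ne : σ₁ ≠ 0 := ne_of_gt hσ₁
        field_simp
      rw [heq]
      calc σ₀ * ((m:ℝ) + K) ≤ σ₀ * ((1 - L - ε/2)*t) :=
            mul_le_mul_of_nonneg_left hstep1 hσ₀.le
        _ ≤ (σ₀ * (B/A)) * ((L+ε)*t) := hstep2
        _ ≤ (σ₀ * (B/A)) * n := hstep3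
    have hkey := budKey' hσ₀ hσ₁ hh hA hB (u := σ₀ * ((m:ℝ) + K)) (v := σ₁ * (n:ℝ))
      (mul_nonneg hσ₀.le (add_nonneg (Nat.cast_nonneg m) hKpos.le)) huv
    have e1 : (σ₀ * ((m:ℝ)+K)) ^ (2*h) = σ₀^(2*h) * ((m:ℝ)+K)^(2*h) :=
      Real.mul_rpow hσ₀.le (add_nonneg (Nat.cast_nonneg m) hKpos.le)
    have e2 : (σ₁ * (n:ℝ)) ^ (2*h) = σ₁^(2*h) * (n:ℝ)^(2*h) :=
      Real.mul_rpow hσ₁.le (Nat.cast_nonneg n)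
    rw [e1, e2] at hkey
    have hmid : B * (σ₀ ^ (2*h) / (n:ℝ) ^ (2*h)) ≤ A * (σ₁ ^ (2*h) / ((m:ℝ)+K) ^ (2*h)) := by
      rw [mul_div_assoc', mul_div_assoc', div_le_div_iff₀ hnpow hmKpow]
      linarith only [hkey]
    calc B * budGain σ σ₀ n ^ h ≤ B * (σ₀ ^ (2*h) / (n:ℝ) ^ (2*h)) :=
          mul_le_mul_of_nonneg_left ha_le hBpos.le
      _ ≤ A * (σ₁ ^ (2*h) / ((m:ℝ)+K) ^ (2*h)) := hmid
      _ ≤ A * budGain σ σ₁ m ^ h := mul_le_mul_of_nonneg_left hb_ge hApos.le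
  rw [hL, div_le_div_iff₀ (by linarith : (0:ℝ) < budGain σ σ₀ n ^ h + budGain σ σ₁ m ^ h) hABpos]
  linarith only [hmain]

lemma budDrift_lower (hσ : 0 < σ) (hσ₀ : 0 < σ₀) (hσ₁ : 0 < σ₁)
    (hh : 0 ≤ h) (hε : 0 < ε) :
    ∃ T₀ : ℕ, 1 ≤ T₀ ∧ ∀ t n m : ℕ, T₀ ≤ t → n + m = t →
      (n:ℝ)/t ≤ σ₀ ^ (2*h/(1+2*h)) / (σ₀ ^ (2*h/(1+2*h)) + σ₁ ^ (2*h/(1+2*h))) - ε →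
      σ₀ ^ (2*h/(1+2*h)) / (σ₀ ^ (2*h/(1+2*h)) + σ₁ ^ (2*h/(1+2*h))) ≤
        budGain σ σ₀ n ^ h / (budGain σ σ₀ n ^ h + budGain σ σ₁ m ^ h) := by
  obtain ⟨A, hA⟩ : ∃ x, x = σ₀ ^ (2*h/(1+2*h)) := ⟨_, rfl⟩
  obtain ⟨B, hB⟩ : ∃ x, x = σ₁ ^ (2*h/(1+2*h)) := ⟨_, rfl⟩
  rw [← hA, ← hB]
  have hApos : 0 < A := hA ▸ Real.rpow_pos_of_pos hσ₀ _
  have hBpos : 0 < B := hB ▸ Real.rpow_pos_of_pos hσ₁ _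
  obtain ⟨L, hL⟩ : ∃ x, x = A / (A+B) := ⟨_, rfl⟩
  rw [← hL]
  have hABpos : (0:ℝ) < A + B := by linarith
  have hLpos : 0 < L := by rw [hL]; exact div_pos hApos hABpos
  have hL1 : L < 1 := by rw [hL, div_lt_one hABpos]; linarith
  have hLdef : L*(A+B) = A := by rw [hL, div_mul_cancel₀ _ (ne_of_gt hABpos)]
  obtain ⟨K, hK⟩ : ∃ x, x = σ₀ ^ 2 / σ ^ 2 + 1 := ⟨_, rfl⟩
  have hKpos : 0 < K := by rw [hK]; positivity
  refine ⟨max 1 ⌈2*K/ε⌉₊, le_max_left _ _, ?_⟩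
  intro t n m ht hnm hge
  have ht1 : 1 ≤ t := le_trans (le_max_left _ _) ht
  have htR : (1:ℝ) ≤ t := by exact_mod_cast ht1
  have htpos : (0:ℝ) < t := by linarith
  have hKt : K ≤ ε/2 * t := by
    have h1 : (⌈2*K/ε⌉₊ : ℝ) ≤ t := by exact_mod_cast le_trans (le_max_right _ _) ht
    have h2 : 2*K/ε ≤ t := le_trans (Nat.le_ceil _) h1
    have h3 : 2*K ≤ t*ε := (div_le_iff₀ hε).mp h2
    linarith only [h3]
  have hmR : (m:ℝ) = t - n := by
    have : (n:ℝ) + m = t := by exact_mod_cast hnm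
    linarith
  have hnn : (0:ℝ) ≤ n := Nat.cast_nonneg n
  have hnle : (n:ℝ) ≤ (L - ε) * t := (div_le_iff₀ htpos).mp hge
  have hmge : (1 - L + ε) * t ≤ (m:ℝ) := by linarith only [hnle, hmR]
  have hmRpos : (0:ℝ) < m := by
    have h9 : 0 < (1-L+ε)*t := mul_pos (by linarith) htpos
    linarith only [hmge, h9]
  have hm1 : 1 ≤ m := by
    rcases Nat.eq_zero_or_pos m with h0 | h1
    · rw [h0] at hmRpos; simp at hmRpos
    · exact h1
  have hapos : 0 < budGain σ σ₀ n ^ h :=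
    Real.rpow_pos_of_pos (budGain_pos hσ hσ₀ n) h
  have hbpos : 0 < budGain σ σ₁ m ^ h :=
    Real.rpow_pos_of_pos (budGain_pos hσ hσ₁ m) h
  have hmain : A * budGain σ σ₁ m ^ h ≤ B * budGain σ σ₀ n ^ h := by
    have hb_le : budGain σ σ₁ m ^ h ≤ σ₁ ^ (2*h) / (m:ℝ) ^ (2*h) :=
      budGain_rpow_le hσ hσ₁ hh hm1
    have ha_ge : σ₀ ^ (2*h) / ((n:ℝ) + K) ^ (2*h) ≤ budGain σ σ₀ n ^ h := by
      rw [hK]; exact budGain_rpow_ge hσ hσ₀ hh n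
    have hmpow : 0 < (m:ℝ) ^ (2*h) := Real.rpow_pos_of_pos hmRpos _
    have hnKpow : 0 < ((n:ℝ) + K) ^ (2*h) :=
      Real.rpow_pos_of_pos (add_pos_of_nonneg_of_pos (Nat.cast_nonneg n) hKpos) _
    have huv : σ₁ * ((n:ℝ) + K) ≤ (σ₁/σ₀) * (A/B) * (σ₀ * (m:ℝ)) := by
      have hstep1 : (n:ℝ) + K ≤ (L - ε/2) * t := by linarith only [hnle, hKt]
      have hnum : (L - ε/2) * B ≤ A * (1 - L + ε) := by
        linarith only [hLdef, (mul_pos hε hApos).le, (mul_pos hε hBpos).le]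
      have h6 := mul_le_mul_of_nonneg_left hnum (show (0:ℝ) ≤ σ₁ * t by positivity)
      have hstep2 : σ₁ * ((L - ε/2)*t) ≤ (σ₁ * (A/B)) * ((1-L+ε)*t) := by
        rw [← mul_le_mul_iff_of_pos_right hBpos]
        calc σ₁ * ((L-ε/2)*t) * B = σ₁ * t * ((L-ε/2)*B) := by ring
          _ ≤ σ₁ * t * (A*(1-L+ε)) := h6
          _ = (σ₁ * (A/B)) * ((1-L+ε)*t) * B := by
              have hBne : B ≠ 0 := ne_of_gt hBpos
              field_simp
      have hstep3 : (σ₁ * (A/B)) * ((1-L+ε)*t) ≤ (σ₁ * (A/B)) * m :=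
        mul_le_mul_of_nonneg_left hmge
          (mul_nonneg hσ₁.le (div_nonneg hApos.le hBpos.le))
      have heq : (σ₁/σ₀) * (A/B) * (σ₀ * (m:ℝ)) = (σ₁ * (A/B)) * m := by
        have hBne : B ≠ 0 := ne_of_gt hBpos
        have h0ne : σ₀ ≠ 0 := ne_of_gt hσ₀
        field_simp
      rw [heq]
      calc σ₁ * ((n:ℝ) + K) ≤ σ₁ * ((L - ε/2)*t) :=
            mul_le_mul_of_nonneg_left hstep1 hσ₁.le
        _ ≤ (σ₁ * (A/B)) * ((1-L+ε)*t) := hstep2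
        _ ≤ (σ₁ * (A/B)) * m := hstep3
    have hkey := budKey' hσ₁ hσ₀ hh hB hA (u := σ₁ * ((n:ℝ) + K)) (v := σ₀ * (m:ℝ))
      (mul_nonneg hσ₁.le (add_nonneg (Nat.cast_nonneg n) hKpos.le)) huv
    have e1 : (σ₁ * ((n:ℝ)+K)) ^ (2*h) = σ₁^(2*h) * ((n:ℝ)+K)^(2*h) :=
      Real.mul_rpow hσ₁.le (add_nonneg (Nat.cast_nonneg n) hKpos.le)
    have e2 : (σ₀ * (m:ℝ)) ^ (2*h) = σ₀^(2*h) * (m:ℝ)^(2*h) :=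
      Real.mul_rpow hσ₀.le (Nat.cast_nonneg m)
    rw [e1, e2] at hkey
    have hmid : A * (σ₁ ^ (2*h) / (m:ℝ) ^ (2*h)) ≤ B * (σ₀ ^ (2*h) / ((n:ℝ)+K) ^ (2*h)) := by
      rw [mul_div_assoc', mul_div_assoc', div_le_div_iff₀ hmpow hnKpow]
      linarith only [hkey]
    calc A * budGain σ σ₁ m ^ h ≤ A * (σ₁ ^ (2*h) / (m:ℝ) ^ (2*h)) :=
          mul_le_mul_of_nonneg_left hb_le hApos.le
      _ ≤ B * (σ₀ ^ (2*h) / ((n:ℝ)+K) ^ (2*h)) := hmid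
      _ ≤ B * budGain σ σ₀ n ^ h := mul_le_mul_of_nonneg_left ha_ge hBpos.le
  rw [hL, div_le_div_iff₀ hABpos (by linarith : (0:ℝ) < budGain σ σ₀ n ^ h + budGain σ σ₁ m ^ h)]
  linarith only [hmain]

end

/-- Deterministic upper-crossing lemma: if the noise series converges and the drift
pushes down above `L + ε`, then eventually the fraction is at most `L + 3ε`. -/
lemma budDet_upper (L ε : ℝ) (hε : 0 < ε)
    (n : ℕ → ℕ) (p W : ℕ → ℝ)
    (hn : ∀ t, n (t + 1) = n t ∨ n (t + 1) = n t + 1)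
    (hnt : ∀ t, n t ≤ t)
    (hWdef : ∀ T, W T = ∑ t ∈ Finset.Ico 1 T, (((n (t + 1) : ℝ) - n t) - p t) / (t + 1))
    (hdrift : ∃ T₀, ∀ t, T₀ ≤ t → L + ε ≤ (n t : ℝ) / t → p t ≤ L)
    (hWconv : ∃ c, Tendsto W atTop (nhds c)) :
    ∀ᶠ T in atTop, (n T : ℝ) / T ≤ L + 3 * ε := by
  obtain ⟨T₀, hT₀⟩ := hdrift
  obtain ⟨c, hc⟩ := hWconv
  obtain ⟨S₀, hS₀⟩ : ∃ S₀, ∀ T, S₀ ≤ T → |W T - c| ≤ ε/4 := by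
    obtain ⟨N, hN⟩ := (Metric.tendsto_atTop.mp hc) (ε/4) (by linarith)
    exact ⟨N, fun T hT => le_of_lt (by simpa [Real.dist_eq] using hN T hT)⟩
  set S := max (max T₀ S₀) (⌈1/ε⌉₊ + 1) with hS
  have hST₀ : T₀ ≤ S := le_trans (le_max_left _ _) (le_max_left _ _)
  have hSS₀ : S₀ ≤ S := le_trans (le_max_right _ _) (le_max_left _ _)
  have hS1 : 1 ≤ S := le_trans (Nat.le_add_left 1 _) (le_max_right _ _)
  have hSpos : (0:ℝ) < S := by
    have : (1:ℝ) ≤ S := by exact_mod_cast hS1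
    linarith
  have hSe : 1/(S:ℝ) ≤ ε := by
    have h1 : (1:ℝ)/ε ≤ ⌈1/ε⌉₊ := Nat.le_ceil _
    have h2 : ((⌈1/ε⌉₊ + 1 : ℕ):ℝ) ≤ S := by exact_mod_cast le_max_right (max T₀ S₀) _
    have h3 : (1:ℝ)/ε ≤ S := by push_cast at h2; linarith
    rw [div_le_iff₀ hSpos]
    rw [div_le_iff₀ hε] at h3
    nlinarith
  have hWS : ∀ T T', S ≤ T → S ≤ T' → |W T - W T'| ≤ ε/2 := by
    intro T T' hT hT'
    have h1 := hS₀ T (le_trans hSS₀ hT)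
    have h2 := hS₀ T' (le_trans hSS₀ hT')
    calc |W T - W T'| = |(W T - c) - (W T' - c)| := by ring_nf
      _ ≤ |W T - c| + |W T' - c| := abs_sub _ _
      _ ≤ ε/2 := by linarith
  have hx0 : ∀ t, (0:ℝ) ≤ (n t : ℝ) / t := fun t => by positivity
  have key : ∀ t, 1 ≤ t → (n (t+1) : ℝ)/((t:ℝ)+1) =
      (n t : ℝ)/t + (p t - (n t : ℝ)/t)/((t:ℝ)+1) + (W (t+1) - W t) := by
    intro t ht
    have hWd : W (t+1) - W t = (((n (t+1) : ℝ) - n t) - p t)/((t:ℝ)+1) := by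
      rw [hWdef (t+1), hWdef t, Finset.sum_Ico_succ_top ht]
      push_cast
      ring
    have htpos : (0:ℝ) < t := by
      have : (1:ℝ) ≤ t := by exact_mod_cast ht
      linarith
    rw [hWd]
    field_simp
    ring
  have hstep : ∀ t, 1 ≤ t → (n (t+1) : ℝ)/((t:ℝ)+1) ≤ (n t : ℝ)/t + 1/((t:ℝ)+1) := by
    intro t ht
    have htpos : (0:ℝ) < t := by
      have : (1:ℝ) ≤ t := by exact_mod_cast ht
      linarith
    have hnn : (n (t+1) : ℝ) ≤ (n t : ℝ) + 1 := by
      rcases hn t with h | h <;> rw [h] <;> push_cast <;> linarith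
    have h1 : (n (t+1) : ℝ)/((t:ℝ)+1) ≤ ((n t : ℝ) + 1)/((t:ℝ)+1) := by gcongr
    have h2 : (n t : ℝ)/((t:ℝ)+1) ≤ (n t : ℝ)/t :=
      div_le_div_of_nonneg_left (Nat.cast_nonneg _) htpos (by linarith)
    calc (n (t+1) : ℝ)/((t:ℝ)+1) ≤ ((n t : ℝ) + 1)/((t:ℝ)+1) := h1
      _ = (n t : ℝ)/((t:ℝ)+1) + 1/((t:ℝ)+1) := by ring
      _ ≤ (n t : ℝ)/t + 1/((t:ℝ)+1) := by linarith
  -- Step 1: there is a time ≥ S where the fraction is below L + ε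
  have step1 : ∃ t₀, S ≤ t₀ ∧ (n t₀ : ℝ)/t₀ < L + ε := by
    by_contra hcon
    push_neg at hcon
    set H : ℕ → ℝ := fun T => ∑ i ∈ Finset.range T, (1:ℝ)/((i:ℝ)+1) with hH
    have tele : ∀ T, S ≤ T →
        (n T : ℝ)/T ≤ (n S : ℝ)/S - ε*(H T - H S) + (W T - W S) := by
      refine Nat.le_induction ?_ ?_
      · simp
      · intro T hT IH
        have h1 : 1 ≤ T := le_trans hS1 hT
        have hxT : L + ε ≤ (n T : ℝ)/T := hcon T hT
        have hpT : p T ≤ L := hT₀ T (le_trans hST₀ hT) hxT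
        have hTpos : (0:ℝ) < (T:ℝ)+1 := by positivity
        have hdiv : (p T - (n T : ℝ)/T)/((T:ℝ)+1) ≤ (-ε)/((T:ℝ)+1) :=
          (div_le_div_iff_of_pos_right hTpos).mpr (by linarith)
        have hHsucc : H (T+1) = H T + 1/((T:ℝ)+1) := by
          rw [hH]
          simp [Finset.sum_range_succ]
        have hkey := key T h1
        have hHmul : ε * (H (T+1) - H S) = ε*(H T - H S) + ε * (1/((T:ℝ)+1)) := by
          rw [hHsucc]
          ring
        have hcast : ((T+1 : ℕ):ℝ) = (T:ℝ)+1 := by push_cast; ring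
        rw [hcast]
        calc (n (T+1) : ℝ)/((T:ℝ)+1)
            = (n T : ℝ)/T + (p T - (n T : ℝ)/T)/((T:ℝ)+1) + (W (T+1) - W T) := hkey
          _ ≤ ((n S : ℝ)/S - ε*(H T - H S) + (W T - W S))
              + (p T - (n T : ℝ)/T)/((T:ℝ)+1) + (W (T+1) - W T) := by linarith [IH]
          _ ≤ (n S : ℝ)/S - ε*(H T - H S) - ε * (1/((T:ℝ)+1)) + (W (T+1) - W S) := by
              have hd2 : (p T - (n T : ℝ)/T)/((T:ℝ)+1) ≤ -(ε * (1/((T:ℝ)+1))) := by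
                refine hdiv.trans (le_of_eq ?_)
                ring
              linarith [hd2]
          _ = (n S : ℝ)/S - ε*(H (T+1) - H S) + (W (T+1) - W S) := by
              rw [hHsucc]
              ring
    have hHtop : Tendsto H atTop atTop := by
      rw [hH]
      exact Real.tendsto_sum_range_one_div_nat_succ_atTop
    have hev : ∀ᶠ T in atTop, ((n S : ℝ)/S + ε + 1)/ε + H S ≤ H T :=
      hHtop.eventually_ge_atTop _
    obtain ⟨T, hTH, hTS⟩ := (hev.and (eventually_ge_atTop S)).exists
    have hT1 := tele T hTS
    have hWT : W T - W S ≤ ε/2 := by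
      have h4 := abs_le.mp (hWS T S hTS le_rfl)
      linarith [h4.2]
    have hHT : (n S : ℝ)/S + ε + 1 ≤ ε*(H T - H S) := by
      have h5 : ((n S : ℝ)/S + ε + 1)/ε ≤ H T - H S := by linarith
      have h6 := (div_le_iff₀ hε).mp h5
      linarith
    have hxT := hx0 T
    linarith
  obtain ⟨t₀, ht₀S, ht₀x⟩ := step1
  -- Step 2: once below, stays below L + ε + 1/S + ε
  set C := L + ε + 1/(S:ℝ) - W S + ε/2 with hC
  have claim : ∀ T, t₀ ≤ T → (n T : ℝ)/T - W T ≤ C := by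
    refine Nat.le_induction ?_ ?_
    · have h1 : |W t₀ - W S| ≤ ε/2 := hWS t₀ S ht₀S le_rfl
      have h2 := (abs_le.mp h1).1
      have h3 : (0:ℝ) ≤ 1/(S:ℝ) := by positivity
      rw [hC]
      linarith
    · intro T hT IH
      have hTS : S ≤ T := le_trans ht₀S hT
      have h1 : 1 ≤ T := le_trans hS1 hTS
      have hTpos : (0:ℝ) < (T:ℝ)+1 := by positivity
      rcases le_or_gt (L + ε) ((n T : ℝ)/T) with hcase | hcase
      · have hpT : p T ≤ L := hT₀ T (le_trans hST₀ hTS) hcase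
        have hkey := key T h1
        have hdiv : (p T - (n T : ℝ)/T)/((T:ℝ)+1) ≤ 0 := by
          apply div_nonpos_of_nonpos_of_nonneg ?_ (le_of_lt hTpos)
          linarith
        have : (n (T+1) : ℝ)/((T:ℝ)+1) - W (T+1) ≤ (n T : ℝ)/T - W T := by
          rw [hkey]
          linarith
        have hcast : ((T+1 : ℕ):ℝ) = (T:ℝ)+1 := by push_cast; ring
        rw [hcast]
        linarith
      · have hs := hstep T h1
        have hTS1 : (S:ℝ) ≤ (T:ℝ)+1 := by
          have : (S:ℝ) ≤ T := by exact_mod_cast hTS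
          linarith
        have hdivS : 1/((T:ℝ)+1) ≤ 1/(S:ℝ) := by gcongr
        have hWd : |W (T+1) - W S| ≤ ε/2 := hWS (T+1) S (le_trans hTS (Nat.le_succ T)) le_rfl
        have h2 := (abs_le.mp hWd).1
        have hcast : ((T+1 : ℕ):ℝ) = (T:ℝ)+1 := by push_cast; ring
        rw [hcast, hC]
        linarith
  refine eventually_atTop.mpr ⟨t₀, fun T hT => ?_⟩
  have h1 := claim T hT
  have hTS : S ≤ T := le_trans ht₀S hT
  have hWd : |W T - W S| ≤ ε/2 := hWS T S hTS le_rfl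
  have h2 := (abs_le.mp hWd).2
  rw [hC] at h1
  linarith

lemma budDet (L : ℝ) (n : ℕ → ℕ) (p : ℕ → ℝ)
    (hn : ∀ t, n (t + 1) = n t ∨ n (t + 1) = n t + 1)
    (hnt : ∀ t, n t ≤ t)
    (hdriftU : ∀ ε, 0 < ε → ∃ T₀, ∀ t, T₀ ≤ t → L + ε ≤ (n t : ℝ)/t → p t ≤ L)
    (hdriftL : ∀ ε, 0 < ε → ∃ T₀, ∀ t, T₀ ≤ t → (n t : ℝ)/t ≤ L - ε → L ≤ p t)
    (hWconv : ∃ c, Tendsto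
      (fun T => ∑ t ∈ Finset.Ico 1 T, (((n (t+1):ℝ) - n t) - p t)/((t:ℝ)+1))
      atTop (nhds c)) :
    Tendsto (fun t => (n t : ℝ)/t) atTop (nhds L) := by
  rw [Metric.tendsto_atTop]
  intro δ hδ
  have hε : 0 < δ/4 := by linarith
  have hup : ∀ᶠ T in atTop, (n T : ℝ)/T ≤ L + 3*(δ/4) :=
    budDet_upper L (δ/4) hε n p _ hn hnt (fun T => rfl) (hdriftU (δ/4) hε) hWconv
  set n' : ℕ → ℕ := fun t => t - n t with hn'def
  have hn'sub : ∀ t, (n' t : ℝ) = (t:ℝ) - n t := by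
    intro t
    rw [hn'def]
    push_cast [Nat.cast_sub (hnt t)]
    ring
  have hn' : ∀ t, n' (t+1) = n' t ∨ n' (t+1) = n' t + 1 := by
    intro t
    have h1 := hnt t
    have h2 := hnt (t+1)
    rcases hn t with h | h
    · right
      simp only [hn'def]
      omega
    · left
      simp only [hn'def]
      omega
  have hn't : ∀ t, n' t ≤ t := fun t => Nat.sub_le t (n t)
  have hdrift' : ∃ T₀, ∀ t, T₀ ≤ t → (1 - L) + δ/4 ≤ (n' t : ℝ)/t → (1 - p t) ≤ 1 - L := by
    obtain ⟨T₀, hT₀⟩ := hdriftL (δ/4) hε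
    refine ⟨max T₀ 1, fun t ht hx => ?_⟩
    have ht1 : 1 ≤ t := le_trans (le_max_right _ _) ht
    have htpos : (0:ℝ) < t := by
      have : (1:ℝ) ≤ t := by exact_mod_cast ht1
      linarith
    have hxx : (n t : ℝ)/t ≤ L - δ/4 := by
      rw [hn'sub t] at hx
      have heq : ((t:ℝ) - n t)/t = 1 - (n t:ℝ)/t := by field_simp
      rw [heq] at hx
      linarith
    have := hT₀ t (le_trans (le_max_left _ _) ht) hxx
    linarith
  obtain ⟨c, hc⟩ := hWconv
  have hW'eq : ∀ T, (∑ t ∈ Finset.Ico 1 T, (((n' (t+1):ℝ) - n' t) - (1 - p t))/((t:ℝ)+1))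
      = - ∑ t ∈ Finset.Ico 1 T, (((n (t+1):ℝ) - n t) - p t)/((t:ℝ)+1) := by
    intro T
    rw [← Finset.sum_neg_distrib]
    refine Finset.sum_congr rfl (fun t _ => ?_)
    rw [hn'sub (t+1), hn'sub t]
    push_cast
    ring
  have hW'conv : ∃ c', Tendsto
      (fun T => ∑ t ∈ Finset.Ico 1 T, (((n' (t+1):ℝ) - n' t) - (1 - p t))/((t:ℝ)+1))
      atTop (nhds c') := by
    refine ⟨-c, ?_⟩
    have : (fun T => ∑ t ∈ Finset.Ico 1 T, (((n' (t+1):ℝ) - n' t) - (1 - p t))/((t:ℝ)+1))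
        = fun T => - ∑ t ∈ Finset.Ico 1 T, (((n (t+1):ℝ) - n t) - p t)/((t:ℝ)+1) :=
      funext hW'eq
    rw [this]
    exact hc.neg
  have hlow : ∀ᶠ T in atTop, (n' T : ℝ)/T ≤ (1 - L) + 3*(δ/4) :=
    budDet_upper (1-L) (δ/4) hε n' (fun t => 1 - p t) _ hn' hn't (fun T => rfl)
      hdrift' hW'conv
  have hfin : ∀ᶠ T in atTop, dist ((n T : ℝ)/T) L < δ := by
    filter_upwards [hup, hlow, eventually_ge_atTop 1] with T h1 h2 h3
    have htpos : (0:ℝ) < T := by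
      have : (1:ℝ) ≤ T := by exact_mod_cast h3
      linarith
    have heq : (n' T : ℝ)/T = 1 - (n T:ℝ)/T := by
      rw [hn'sub T]
      field_simp
    rw [heq] at h2
    rw [Real.dist_eq, abs_lt]
    constructor <;> linarith
  exact eventually_atTop.mp hfin

/-- **Example 1, two arms (normal outcomes).** In a two-arm BUD design with
constant parameter `h ≥ 0`, prior variance `σ²` and arm sampling variances
`σ₀², σ₁²`, where the next patient is assigned to arm `0` with conditional
probability `Δ₀(N₀(t))^h / (Δ₀(N₀(t))^h + Δ₁(N₁(t))^h)`, the proportion of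
patients assigned to arm `0` converges almost surely to
`σ₀^{2h/(1+2h)} / (σ₀^{2h/(1+2h)} + σ₁^{2h/(1+2h)})`. -/
theorem stmt_3
    (σ σ₀ σ₁ h : ℝ) (hσ : 0 < σ) (hσ₀ : 0 < σ₀) (hσ₁ : 0 < σ₁) (hh : 0 ≤ h)
    {Ω : Type*} {𝓖 : MeasurableSpace Ω} {μ : Measure Ω} [IsProbabilityMeasure μ]
    (𝓕 : Filtration ℕ 𝓖)
    (A : ℕ → Ω → ℕ) (hA01 : ∀ t ω, A t ω = 0 ∨ A t ω = 1)
    (hA_adapted : ∀ t, Measurable[𝓕 t] (A t))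
    (N : ℕ → ℕ → Ω → ℕ)
    (hN : ∀ a t ω, N a t ω = ((Finset.Icc 1 t).filter (fun s => A s ω = a)).card)
    (h_rand : ∀ t ≥ 1,
      μ[Set.indicator {ω | A (t + 1) ω = 0} (fun _ => (1 : ℝ)) | 𝓕 t]
        =ᵐ[μ] fun ω =>
          budGain σ σ₀ (N 0 t ω) ^ h /
            (budGain σ σ₀ (N 0 t ω) ^ h + budGain σ σ₁ (N 1 t ω) ^ h)) :
    ∀ᵐ ω ∂μ, Tendsto (fun t => (N 0 t ω : ℝ) / t) atTop
      (nhds (σ₀ ^ (2 * h / (1 + 2 * h)) /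
        (σ₀ ^ (2 * h / (1 + 2 * h)) + σ₁ ^ (2 * h / (1 + 2 * h))))) := by
  classical
  -- pointwise counting facts
  have hNsum : ∀ a t ω, N a t ω = ∑ s ∈ Finset.Icc 1 t, if A s ω = a then 1 else 0 := by
    intro a t ω
    rw [hN, Finset.card_filter]
  have hNsucc : ∀ t ω, N 0 (t+1) ω = N 0 t ω + if A (t+1) ω = 0 then 1 else 0 := by
    intro t ω
    rw [hNsum 0 (t+1) ω, hNsum 0 t ω, ← Finset.Ico_add_one_right_eq_Icc, ← Finset.Ico_add_one_right_eq_Icc,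
      Finset.sum_Ico_succ_top (by omega : 1 ≤ t+1)]
  have hNle : ∀ a t ω, N a t ω ≤ t := by
    intro a t ω
    rw [hN]
    calc ((Finset.Icc 1 t).filter (fun s => A s ω = a)).card
        ≤ (Finset.Icc 1 t).card := Finset.card_filter_le _ _
      _ = t := by simp [Nat.card_Icc]
  have hNadd : ∀ t ω, N 0 t ω + N 1 t ω = t := by
    intro t ω
    have h01 : ∀ s, ((if A s ω = 0 then (1:ℕ) else 0) + if A s ω = 1 then 1 else 0) = 1 := by
      intro s
      rcases hA01 s ω with hx | hx <;> simp [hx]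
    rw [hNsum 0 t ω, hNsum 1 t ω, ← Finset.sum_add_distrib,
      Finset.sum_congr rfl (fun s _ => h01 s)]
    simp [Nat.card_Icc]
  -- measurability of the counting processes
  have hAset : ∀ (s : ℕ) (a : ℕ), MeasurableSet[𝓕 s] {ω | A s ω = a} := fun s a =>
    (hA_adapted s) (measurableSet_singleton a)
  have hNmeas : ∀ a t, Measurable[𝓕 t] (fun ω => N a t ω) := by
    intro a t
    have he : (fun ω => N a t ω) = fun ω => ∑ s ∈ Finset.Icc 1 t,
        if A s ω = a then 1 else 0 := funext (hNsum a t)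
    rw [he]
    refine Finset.measurable_sum _ (fun s hs => ?_)
    have hmem := (Finset.mem_Icc.mp hs).2
    have hAm : Measurable[𝓕 t] (A s) := (hA_adapted s).mono (𝓕.mono hmem) le_rfl
    exact Measurable.ite (hAm (measurableSet_singleton a)) measurable_const measurable_const
  -- the assignment indicator, assignment probability, and noise series
  set ξ : ℕ → Ω → ℝ := fun t => Set.indicator {ω | A t ω = 0} fun _ => (1:ℝ) with hξdef
  set p : ℕ → Ω → ℝ := fun t ω => budGain σ σ₀ (N 0 t ω) ^ h /
      (budGain σ σ₀ (N 0 t ω) ^ h + budGain σ σ₁ (N 1 t ω) ^ h) with hpdef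
  set D : ℕ → Ω → ℝ := fun t => ((t:ℝ)+1)⁻¹ • (ξ (t+1) - p t) with hDdef
  set W : ℕ → Ω → ℝ := fun T ω => ∑ t ∈ Finset.Ico 1 T, D t ω with hWdef
  have hξval : ∀ t ω, ξ t ω = if A t ω = 0 then 1 else 0 := by
    intro t ω
    simp [hξdef, Set.indicator_apply]
  have hξ01 : ∀ t ω, 0 ≤ ξ t ω ∧ ξ t ω ≤ 1 := by
    intro t ω
    rw [hξval]
    split_ifs <;> norm_num
  have hppos : ∀ t ω, 0 < p t ω ∧ p t ω < 1 := by
    intro t ω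
    have ha : 0 < budGain σ σ₀ (N 0 t ω) ^ h :=
      Real.rpow_pos_of_pos (budGain_pos hσ hσ₀ _) h
    have hb : 0 < budGain σ σ₁ (N 1 t ω) ^ h :=
      Real.rpow_pos_of_pos (budGain_pos hσ hσ₁ _) h
    constructor
    · rw [hpdef]
      positivity
    · rw [hpdef]
      rw [div_lt_one (by linarith)]
      linarith
  have hξmeas : ∀ t, Measurable[𝓕 t] (ξ t) := fun t =>
    measurable_const.indicator (hAset t 0)
  have hpmeas : ∀ t, Measurable[𝓕 t] (p t) := by
    intro t
    have hcomp := (measurable_of_countable (fun q : ℕ × ℕ =>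
      budGain σ σ₀ q.1 ^ h / (budGain σ σ₀ q.1 ^ h + budGain σ σ₁ q.2 ^ h))).comp
      ((hNmeas 0 t).prodMk (hNmeas 1 t))
    exact hcomp
  have hDmeas : ∀ t, Measurable[𝓕 (t+1)] (D t) := by
    intro t
    rw [hDdef]
    exact (((hξmeas (t+1)).sub ((hpmeas t).mono (𝓕.mono (Nat.le_succ t)) le_rfl)).const_smul _)
  have hξG : ∀ t, Measurable (ξ t) := fun t => (hξmeas t).mono (𝓕.le t) le_rfl
  have hpG : ∀ t, Measurable (p t) := fun t => (hpmeas t).mono (𝓕.le t) le_rfl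
  have hDG : ∀ t, Measurable (D t) := fun t => (hDmeas t).mono (𝓕.le (t+1)) le_rfl
  have hWmeasF : ∀ T, Measurable[𝓕 T] (W T) := by
    intro T
    rw [hWdef]
    refine Finset.measurable_sum _ (fun t ht => ?_)
    have h2 : t + 1 ≤ T := (Finset.mem_Ico.mp ht).2
    exact (hDmeas t).mono (𝓕.mono h2) le_rfl
  have hWG : ∀ T, Measurable (W T) := fun T => (hWmeasF T).mono (𝓕.le T) le_rfl
  -- boundedness
  have hintb : ∀ (f : Ω → ℝ) (C : ℝ), Measurable f → (∀ ω, |f ω| ≤ C) → Integrable f μ := by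
    intro f C hf hC
    refine Integrable.mono' (integrable_const C) hf.aestronglyMeasurable ?_
    exact Eventually.of_forall (fun ω => by simpa [Real.norm_eq_abs] using hC ω)
  have hDabs : ∀ t ω, |D t ω| ≤ 1/((t:ℝ)+1) := by
    intro t ω
    have ht1 : (0:ℝ) < (t:ℝ)+1 := by positivity
    have h1 : |ξ (t+1) ω - p t ω| ≤ 1 := by
      have h2 := hξ01 (t+1) ω
      have h3 := hppos t ω
      rw [abs_le]
      constructor <;> [linarith [h2.1, h3.2]; linarith [h2.2, h3.1]]
    have : D t ω = (ξ (t+1) ω - p t ω)/((t:ℝ)+1) := by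
      rw [hDdef]
      simp [smul_eq_mul]
      ring
    rw [this, abs_div, abs_of_pos ht1]
    gcongr
  have hDb1 : ∀ t ω, |D t ω| ≤ 1 := by
    intro t ω
    refine (hDabs t ω).trans ?_
    rw [div_le_one (by positivity)]
    have : (0:ℝ) ≤ t := Nat.cast_nonneg t
    linarith
  have hWbd : ∀ T ω, |W T ω| ≤ T := by
    intro T ω
    rw [hWdef]
    calc |∑ t ∈ Finset.Ico 1 T, D t ω| ≤ ∑ t ∈ Finset.Ico 1 T, |D t ω| :=
          Finset.abs_sum_le_sum_abs _ _
      _ ≤ ∑ t ∈ Finset.Ico 1 T, (1:ℝ) := Finset.sum_le_sum (fun t _ => hDb1 t ω)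
      _ = ((Finset.Ico 1 T).card : ℝ) := by simp
      _ ≤ T := by
          rw [Nat.card_Ico]
          have := Nat.sub_le T 1
          exact_mod_cast this
  have hintD : ∀ t, Integrable (D t) μ := fun t => hintb _ 1 (hDG t) (hDb1 t)
  have hintW : ∀ T, Integrable (W T) μ := fun T => hintb _ T (hWG T) (hWbd T)
  -- conditional expectation of the increments vanishes
  have hcondD : ∀ t, 1 ≤ t → μ[D t | 𝓕 t] =ᵐ[μ] 0 := by
    intro t ht
    have hint1 : Integrable (ξ (t+1)) μ := hintb _ 1 (hξG (t+1)) (fun ω => by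
      have := hξ01 (t+1) ω
      rw [abs_le]
      constructor <;> linarith [this.1, this.2])
    have hint2 : Integrable (p t) μ := hintb _ 1 (hpG t) (fun ω => by
      have := hppos t ω
      rw [abs_le]
      constructor <;> linarith [this.1, this.2])
    have hcexp_p : μ[p t|𝓕 t] = p t :=
      condExp_of_stronglyMeasurable (𝓕.le t) ((hpmeas t).stronglyMeasurable) hint2
    have hrand := h_rand t ht
    have hsub : μ[ξ (t+1) - p t|𝓕 t] =ᵐ[μ] μ[ξ (t+1)|𝓕 t] - μ[p t|𝓕 t] :=
      condExp_sub hint1 hint2 _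
    have hsmul : μ[D t|𝓕 t] =ᵐ[μ] ((t:ℝ)+1)⁻¹ • μ[ξ (t+1) - p t|𝓕 t] := by
      rw [hDdef]
      exact condExp_smul _ _ _
    refine hsmul.trans ?_
    have hz : μ[ξ (t+1)|𝓕 t] - μ[p t|𝓕 t] =ᵐ[μ] 0 := by
      filter_upwards [hrand] with ω e1
      simp only [Pi.sub_apply, Pi.zero_apply]
      rw [e1, congrFun hcexp_p ω]
      ring
    filter_upwards [hsub, hz] with ω e1 e2
    simp only [Pi.smul_apply, Pi.zero_apply, smul_eq_mul] at *
    rw [e1, e2]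
    ring
  -- W is a martingale
  have hW0 : W 0 = 0 := by
    funext ω
    simp [hWdef]
  have hW1 : W 1 = 0 := by
    funext ω
    simp [hWdef]
  have hWsucc : ∀ T, 1 ≤ T → W (T+1) = W T + D T := by
    intro T hT
    funext ω
    simp only [hWdef, Pi.add_apply]
    rw [Finset.sum_Ico_succ_top hT]
  have hmart : Martingale W 𝓕 μ := by
    refine martingale_nat (fun T => (hWmeasF T).stronglyMeasurable) (fun T => hintW T) ?_
    intro T
    rcases Nat.eq_zero_or_pos T with rfl | hT
    · have e1 : W (0+1) = W 0 := by rw [hW1, hW0]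
      rw [e1, hW0, condExp_zero]
    · rw [hWsucc T hT]
      have h1 : μ[W T + D T|𝓕 T] =ᵐ[μ] μ[W T|𝓕 T] + μ[D T|𝓕 T] :=
        condExp_add (hintW T) (hintD T) _
      have h2 : μ[W T|𝓕 T] = W T :=
        condExp_of_stronglyMeasurable (𝓕.le T) ((hWmeasF T).stronglyMeasurable) (hintW T)
      have h3 := hcondD T hT
      filter_upwards [h1, h3] with ω e1 e3
      simp only [Pi.add_apply, Pi.zero_apply] at *
      rw [e1, congrFun h2 ω, e3]
      ring
  -- second moment bound
  have hintW2 : ∀ T, Integrable (fun ω => (W T ω)^2) μ := by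
    intro T
    refine hintb _ ((T:ℝ)^2) ((hWG T).pow_const 2) (fun ω => ?_)
    rw [abs_pow]
    exact pow_le_pow_left₀ (abs_nonneg _) (hWbd T ω) 2
  have hintWD : ∀ T, Integrable (fun ω => W T ω * D T ω) μ := by
    intro T
    refine hintb _ ((T:ℝ)*1) ((hWG T).mul (hDG T)) (fun ω => ?_)
    rw [abs_mul]
    exact mul_le_mul (hWbd T ω) (hDb1 T ω) (abs_nonneg _) (Nat.cast_nonneg T)
  have hintD2 : ∀ T, Integrable (fun ω => (D T ω)^2) μ := by
    intro T
    refine hintb _ 1 ((hDG T).pow_const 2) (fun ω => ?_)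
    rw [abs_pow]
    exact (pow_le_pow_left₀ (abs_nonneg _) (hDb1 T ω) 2).trans (by norm_num)
  have hWD0 : ∀ T, 1 ≤ T → ∫ ω, W T ω * D T ω ∂μ = 0 := by
    intro T hT
    have hsm : StronglyMeasurable[𝓕 T] (W T) := (hWmeasF T).stronglyMeasurable
    have hmul : μ[(W T) * (D T)|𝓕 T] =ᵐ[μ] (W T) * μ[D T|𝓕 T] :=
      condExp_mul_of_stronglyMeasurable_left hsm (hintWD T) (hintD T)
    have h0 := hcondD T hT
    have hz : μ[(W T) * (D T)|𝓕 T] =ᵐ[μ] 0 := by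
      filter_upwards [hmul, h0] with ω e1 e2
      simp only [Pi.mul_apply, Pi.zero_apply] at *
      rw [e1, e2]
      ring
    have hi : ∫ ω, W T ω * D T ω ∂μ = ∫ ω, (μ[(W T) * (D T)|𝓕 T]) ω ∂μ :=
      (integral_condExp (𝓕.le T)).symm
    rw [hi, integral_congr_ae hz]
    simp
  have hD2le : ∀ T, ∫ ω, (D T ω)^2 ∂μ ≤ (1/((T:ℝ)+1))^2 := by
    intro T
    have hptw : ∀ ω, (D T ω)^2 ≤ (1/((T:ℝ)+1))^2 := by
      intro ω
      have h1 := abs_le.mp (hDabs T ω)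
      nlinarith [h1.1, h1.2]
    calc ∫ ω, (D T ω)^2 ∂μ ≤ ∫ ω, (1/((T:ℝ)+1))^2 ∂μ :=
          integral_mono (hintD2 T) (integrable_const _) hptw
      _ = (1/((T:ℝ)+1))^2 := by simp
  have hW2 : ∀ T, ∫ ω, (W T ω)^2 ∂μ ≤ ∑ t ∈ Finset.Ico 1 T, (1/((t:ℝ)+1))^2 := by
    intro T
    induction T with
    | zero =>
      rw [hW0]
      simp
    | succ T ih =>
      rcases Nat.eq_zero_or_pos T with rfl | hT
      · rw [show (0+1 : ℕ) = 1 from rfl, hW1]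
        simp
      · have he : (fun ω => (W (T+1) ω)^2)
            = fun ω => (W T ω)^2 + (2*(W T ω * D T ω) + (D T ω)^2) := by
          funext ω
          rw [hWsucc T hT]
          simp only [Pi.add_apply]
          ring
        rw [he]
        have hg2 : Integrable (fun ω => 2*(W T ω * D T ω)) μ := (hintWD T).const_mul 2
        have hg : Integrable (fun ω => 2*(W T ω * D T ω) + (D T ω)^2) μ :=
          hg2.add (hintD2 T)
        rw [integral_add (hintW2 T) hg, integral_add hg2 (hintD2 T),
          integral_const_mul, hWD0 T hT]
        rw [Finset.sum_Ico_succ_top hT]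
        have := hD2le T
        linarith [ih]
  have hsum1 : ∀ T : ℕ, ∑ t ∈ Finset.Ico 1 T, (1/((t:ℝ)+1))^2 ≤ 1 := by
    have main : ∀ T : ℕ, 1 ≤ T → ∑ t ∈ Finset.Ico 1 T, (1/((t:ℝ)+1))^2 ≤ 1 - 1/(T:ℝ) := by
      refine Nat.le_induction ?_ ?_
      · simp
      · intro T hT ih
        rw [Finset.sum_Ico_succ_top hT]
        have hTpos : (0:ℝ) < T := by
          have : (1:ℝ) ≤ T := by exact_mod_cast hT
          linarith
        have h1 : (1/((T:ℝ)+1))^2 ≤ 1/((T:ℝ)*((T:ℝ)+1)) := by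
          rw [div_pow, one_pow]
          refine one_div_le_one_div_of_le (by positivity) ?_
          nlinarith
        have h2 : 1/((T:ℝ)*((T:ℝ)+1)) = 1/(T:ℝ) - 1/((T:ℝ)+1) := by
          field_simp
          ring
        push_cast
        linarith
    intro T
    rcases Nat.eq_zero_or_pos T with rfl | hT
    · simp
    · have h3 := main T hT
      have hTpos : (0:ℝ) < T := by
        have : (1:ℝ) ≤ T := by exact_mod_cast hT
        linarith
      have : (0:ℝ) < 1/(T:ℝ) := by positivity
      linarith
  have habs : ∀ T, ∫ ω, |W T ω| ∂μ ≤ 1 := by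
    intro T
    have hptw : ∀ ω, |W T ω| ≤ (1 + (W T ω)^2)/2 := by
      intro ω
      nlinarith [sq_nonneg (|W T ω| - 1), sq_abs (W T ω), abs_nonneg (W T ω)]
    have hiabs : Integrable (fun ω => |W T ω|) μ := (hintW T).abs
    have hirhs : Integrable (fun ω => (1 + (W T ω)^2)/2) μ :=
      ((integrable_const 1).add (hintW2 T)).div_const 2
    have h1 : ∫ ω, |W T ω| ∂μ ≤ ∫ ω, (1 + (W T ω)^2)/2 ∂μ :=
      integral_mono hiabs hirhs hptw
    have h2 : ∫ ω, (1 + (W T ω)^2)/2 ∂μ = (1 + ∫ ω, (W T ω)^2 ∂μ)/2 := by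
      rw [integral_div, integral_add (integrable_const 1) (hintW2 T)]
      simp
    have h3 := (hW2 T).trans (hsum1 T)
    rw [h2] at h1
    linarith
  have hbdd : ∀ T, eLpNorm (W T) 1 μ ≤ ((1:NNReal) : ENNReal) := by
    intro T
    rw [eLpNorm_one_eq_lintegral_enorm, ← ofReal_integral_norm_eq_lintegral_enorm (hintW T)]
    have h1 : ∫ ω, ‖W T ω‖ ∂μ ≤ 1 := by
      simpa [Real.norm_eq_abs] using habs T
    calc ENNReal.ofReal (∫ ω, ‖W T ω‖ ∂μ) ≤ ENNReal.ofReal 1 :=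
          ENNReal.ofReal_le_ofReal h1
      _ = 1 := ENNReal.ofReal_one
      _ = ((1:NNReal) : ENNReal) := by simp
  have hconv := hmart.submartingale.exists_ae_tendsto_of_bdd hbdd
  -- drift inequalities
  filter_upwards [hconv] with ω hω
  obtain ⟨c, hc⟩ := hω
  have hn01 : ∀ t, N 0 (t+1) ω = N 0 t ω ∨ N 0 (t+1) ω = N 0 t ω + 1 := by
    intro t
    by_cases hA : A (t+1) ω = 0
    · right
      rw [hNsucc t ω, if_pos hA]
    · left
      rw [hNsucc t ω, if_neg hA]
      omega
  have hξN : ∀ t, ξ (t+1) ω = ((N 0 (t+1) ω : ℝ) - N 0 t ω) := by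
    intro t
    rw [hξval]
    by_cases hA : A (t+1) ω = 0
    · rw [if_pos hA, hNsucc t ω, if_pos hA]
      push_cast
      ring
    · rw [if_neg hA, hNsucc t ω, if_neg hA]
      push_cast
      ring
  refine budDet _ (fun t => N 0 t ω) (fun t => p t ω) hn01 (fun t => hNle 0 t ω) ?_ ?_ ?_
  · intro ε hε
    obtain ⟨T₀, hT₀1, hT₀⟩ := budDrift_upper σ σ₀ σ₁ h ε hσ hσ₀ hσ₁ hh hε
    exact ⟨T₀, fun t ht hle => hT₀ t (N 0 t ω) (N 1 t ω) ht (hNadd t ω) hle⟩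
  · intro ε hε
    obtain ⟨T₀, hT₀1, hT₀⟩ := budDrift_lower σ σ₀ σ₁ h ε hσ hσ₀ hσ₁ hh hε
    exact ⟨T₀, fun t ht hle => hT₀ t (N 0 t ω) (N 1 t ω) ht (hNadd t ω) hle⟩
  · refine ⟨c, ?_⟩
    have he : (fun T => ∑ t ∈ Finset.Ico 1 T,
        (((N 0 (t+1) ω : ℝ) - N 0 t ω) - p t ω)/((t:ℝ)+1)) = fun T => W T ω := by
      funext T
      rw [hWdef]
      refine Finset.sum_congr rfl (fun t _ => ?_)
      rw [← hξN t, hDdef]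
      simp [smul_eq_mul]
      ring
    rw [he]
    exact hc
end
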